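/- arXiv:2106.13224 — 6 statements merged into one kernel-verified Lean document; each statement's English description precedes it below -/
import Mathlib

section
/- Let (V, 𝓗) be an essential and irreducible arrangement and let A ∈ End(V) be a linear endomorphism such that A(H) ⊆ H for every H ∈ 𝓗. Then A is a scalar multiple of the identity: A = λ·Id_V for some λ ∈ ℂ. -/
open scoped Classical

noncomputable section

variable {V : Type*} [AddCommGroup V] [Module ℂ V]

/-- A linear hyperplane in `V`: the kernel of a non-zero linear functional. -/
def IsHyperplane (H : Submodule ℂ V) : Prop :=
  ∃ f : Module.Dual ℂ V, f ≠ 0 ∧ H = LinearMap.ker f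

/-- An arrangement: every member of the finite set `𝓗` is a linear hyperplane. -/
def IsArrangement (𝓗 : Finset (Submodule ℂ V)) : Prop :=
  ∀ H ∈ 𝓗, IsHyperplane H

/-- The span `W(𝓗) ⊆ V⋆` of the defining functionals of the members of `𝓗`,
i.e. the supremum of the dual annihilators of the hyperplanes. -/
def arrSpan (𝓗 : Finset (Submodule ℂ V)) : Submodule ℂ (Module.Dual ℂ V) :=
  ⨆ H ∈ 𝓗, Submodule.dualAnnihilator H

/-- The centre `T(𝓗)`: the common intersection of the members of `𝓗`. -/
def arrCentre (𝓗 : Finset (Submodule ℂ V)) : Submodule ℂ V :=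
  ⨅ H ∈ 𝓗, H

/-- `𝓗` is essential if its centre is zero. -/
def ArrEssential (𝓗 : Finset (Submodule ℂ V)) : Prop :=
  arrCentre 𝓗 = ⊥

/-- `𝓗` is reducible if it admits a u-plus decomposition into two non-empty parts:
a partition `𝓗 = 𝓗₁ ⊎ 𝓗₂` with `W(𝓗) = W(𝓗₁) ⊕ W(𝓗₂)`. -/
def ArrReducible (𝓗 : Finset (Submodule ℂ V)) : Prop :=
  ∃ 𝓗₁ 𝓗₂ : Finset (Submodule ℂ V), 𝓗₁.Nonempty ∧ 𝓗₂.Nonempty ∧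
    Disjoint 𝓗₁ 𝓗₂ ∧ 𝓗₁ ∪ 𝓗₂ = 𝓗 ∧ Disjoint (arrSpan 𝓗₁) (arrSpan 𝓗₂)

/-- `𝓗` is irreducible if it is not reducible. -/
def ArrIrreducible (𝓗 : Finset (Submodule ℂ V)) : Prop :=
  ¬ ArrReducible 𝓗

/-- If `ker f ≤ ker g` for linear functionals on a finite-dimensional space,
then `g` is a scalar multiple of `f`. -/
private lemma exists_smul_of_ker_le_ker [FiniteDimensional ℂ V]
    {f g : Module.Dual ℂ V} (h : LinearMap.ker f ≤ LinearMap.ker g) :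
    ∃ c : ℂ, g = c • f := by
  have hmem : g ∈ Submodule.span ℂ (Set.range (fun _ : Unit => f)) :=
    FiniteDimensional.mem_span_of_iInf_ker_le_ker (by simpa using h)
  rw [Set.range_const, Submodule.mem_span_singleton] at hmem
  obtain ⟨c, hc⟩ := hmem
  exact ⟨c, hc.symm⟩

/-- The dual annihilator of `ker f` is contained in the span of `f`. -/
private lemma dualAnnihilator_ker_le_span [FiniteDimensional ℂ V]
    (f : Module.Dual ℂ V) :
    (LinearMap.ker f).dualAnnihilator ≤ Submodule.span ℂ {f} := by
  intro g hg
  rw [Submodule.mem_dualAnnihilator] at hg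
  obtain ⟨c, hc⟩ := exists_smul_of_ker_le_ker (f := f) (g := g)
    (fun x hx => by simpa using hg x hx)
  rw [Submodule.mem_span_singleton]
  exact ⟨c, hc.symm⟩

/-- If `(V, 𝓗)` is an essential and irreducible arrangement and
`A ∈ End(V)` satisfies `A(H) ⊆ H` for every `H ∈ 𝓗`, then `A` is a scalar multiple of
the identity. -/
theorem arrangement_preserving_endomorphism_is_scalar
    [FiniteDimensional ℂ V]
    (𝓗 : Finset (Submodule ℂ V)) (harr : IsArrangement 𝓗)
    (hess : ArrEssential 𝓗) (hirr : ArrIrreducible 𝓗)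
    (A : Module.End ℂ V) (hA : ∀ H ∈ 𝓗, Submodule.map A H ≤ H) :
    ∃ c : ℂ, A = c • (1 : Module.End ℂ V) := by
  -- Trivial case: empty arrangement forces `V = 0`.
  rcases Finset.eq_empty_or_nonempty 𝓗 with rfl | ⟨H0, hH0⟩
  · refine ⟨0, ?_⟩
    have hV : ∀ x : V, x = 0 := by
      intro x
      have : x ∈ arrCentre (∅ : Finset (Submodule ℂ V)) := by
        simp [arrCentre]
      rw [hess] at this
      simpa using this
    ext x
    simp [hV x]
  -- Choose defining functionals.
  choose! f hf0 hfker using harr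
  -- The transpose of `A`.
  set B : Module.End ℂ (Module.Dual ℂ V) := A.dualMap with hB
  -- Each functional is an eigenvector of `B`.
  have hev : ∀ H ∈ 𝓗, ∃ c : ℂ, B (f H) = c • f H := by
    intro H hH
    apply exists_smul_of_ker_le_ker (f := f H) (g := B (f H))
    intro x hx
    have hxH : x ∈ H := by rw [hfker H hH]; exact hx
    have : A x ∈ H := hA H hH ⟨x, hxH, rfl⟩
    rw [hfker H hH] at this
    simpa [hB, LinearMap.mem_ker] using this
  choose! lam hlam using hev
  have hfeig : ∀ H ∈ 𝓗, f H ∈ B.eigenspace (lam H) := by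
    intro H hH
    rw [Module.End.mem_eigenspace_iff]
    exact hlam H hH
  have hann : ∀ H ∈ 𝓗, H.dualAnnihilator ≤ B.eigenspace (lam H) := by
    intro H hH
    rw [hfker H hH]
    refine le_trans (dualAnnihilator_ker_le_span (f H)) ?_
    rw [Submodule.span_singleton_le_iff_mem]
    rw [← hfker H hH]
    exact hfeig H hH
  -- All eigenvalues agree, by irreducibility.
  have hsame : ∀ H ∈ 𝓗, lam H = lam H0 := by
    by_contra hcon
    push_neg at hcon
    obtain ⟨H1, hH1, hne⟩ := hcon
    set 𝓗₁ := 𝓗.filter (fun H => lam H = lam H0) with h𝓗₁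
    set 𝓗₂ := 𝓗.filter (fun H => ¬ lam H = lam H0) with h𝓗₂
    apply hirr
    refine ⟨𝓗₁, 𝓗₂, ⟨H0, by simp [h𝓗₁, hH0]⟩, ⟨H1, by simp [h𝓗₂, hH1, hne]⟩,
      Finset.disjoint_filter_filter_not 𝓗 𝓗 _, Finset.filter_union_filter_not_eq _ 𝓗, ?_⟩
    have h1 : arrSpan 𝓗₁ ≤ B.eigenspace (lam H0) := by
      rw [arrSpan, iSup₂_le_iff]
      intro H hH
      rw [h𝓗₁, Finset.mem_filter] at hH
      exact hH.2 ▸ hann H hH.1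
    have h2 : arrSpan 𝓗₂ ≤ ⨆ (μ : ℂ) (_ : μ ≠ lam H0), B.eigenspace μ := by
      rw [arrSpan, iSup₂_le_iff]
      intro H hH
      rw [h𝓗₂, Finset.mem_filter] at hH
      exact le_trans (hann H hH.1) (le_iSup₂ (f := fun μ _ => B.eigenspace μ) (lam H) hH.2)
    exact Disjoint.mono h1 h2 (B.eigenspaces_iSupIndep (lam H0))
  -- Essentiality: the annihilators span the whole dual space.
  have htop : arrSpan 𝓗 = ⊤ := by
    have : arrSpan 𝓗 = (arrCentre 𝓗).dualAnnihilator := by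
      rw [arrCentre, arrSpan]
      rw [iInf_subtype', iSup_subtype']
      rw [Subspace.dualAnnihilator_iInf_eq]
    rw [this, hess, Submodule.dualAnnihilator_bot]
  -- Hence `B` acts as `lam H0` on the whole dual space.
  have hBall : ∀ g : Module.Dual ℂ V, B g = lam H0 • g := by
    intro g
    have hg : g ∈ B.eigenspace (lam H0) := by
      have hle : arrSpan 𝓗 ≤ B.eigenspace (lam H0) := by
        rw [arrSpan, iSup₂_le_iff]
        intro H hH
        exact (hsame H hH) ▸ hann H hH
      exact hle (htop ▸ Submodule.mem_top)
    rwa [Module.End.mem_eigenspace_iff] at hg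
  refine ⟨lam H0, ?_⟩
  ext x
  have hx : ∀ g : Module.Dual ℂ V, g (A x - lam H0 • x) = 0 := by
    intro g
    have := congrArg (fun φ : Module.Dual ℂ V => φ x) (hBall g)
    simp only [hB, LinearMap.dualMap_apply, LinearMap.smul_apply] at this
    simp [map_sub, this, map_smul, smul_eq_mul, mul_comm]
  have := (Module.forall_dual_apply_eq_zero_iff ℂ (A x - lam H0 • x)).mp hx
  have hAx : A x = lam H0 • x := by
    rwa [sub_eq_zero] at this
  simp [hAx]
end
end

section
/- Every non-empty arrangement (V, 𝓗) admits an irreducible decomposition 𝓗 = 𝓗₁ ⊎ … ⊎ 𝓗_k, i.e. a u-plus decomposition in which every subset 𝓗_i is non-empty and irreducible; moreover this decomposition is unique up to relabelling of the subsets 𝓗_i. -/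
open scoped Classical

noncomputable section

variable {V : Type*} [AddCommGroup V] [Module ℂ V]

/-- An irreducible decomposition of `𝓗`: a u-plus decomposition (a partition of `𝓗`
whose spans of defining functionals are independent) all of whose parts are
non-empty and irreducible. -/
def IsIrredDecomp (𝓗 : Finset (Submodule ℂ V)) (P : Finset (Finset (Submodule ℂ V))) : Prop :=
  (∀ p ∈ P, p.Nonempty) ∧
  (∀ p ∈ P, ∀ q ∈ P, p ≠ q → Disjoint p q) ∧
  P.biUnion id = 𝓗 ∧
  (∀ p ∈ P, Disjoint (arrSpan p) (⨆ q ∈ P.erase p, arrSpan q)) ∧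
  ∀ p ∈ P, ArrIrreducible p

lemma ann_le_arrSpan {H : Submodule ℂ V} {s : Finset (Submodule ℂ V)} (h : H ∈ s) :
    Submodule.dualAnnihilator H ≤ arrSpan s :=
  le_iSup₂_of_le H h le_rfl

lemma arrSpan_le {s : Finset (Submodule ℂ V)} {X : Submodule ℂ (Module.Dual ℂ V)}
    (h : ∀ H ∈ s, Submodule.dualAnnihilator H ≤ X) : arrSpan s ≤ X :=
  iSup₂_le h

lemma arrSpan_mono {s t : Finset (Submodule ℂ V)} (h : s ⊆ t) : arrSpan s ≤ arrSpan t :=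
  arrSpan_le fun H hH => ann_le_arrSpan (h hH)

lemma biSup_arrSpan_le {P : Finset (Finset (Submodule ℂ V))} {X : Submodule ℂ (Module.Dual ℂ V)}
    (h : ∀ p ∈ P, arrSpan p ≤ X) : (⨆ p ∈ P, arrSpan p) ≤ X :=
  iSup₂_le h

lemma arrSpan_le_biSup {p : Finset (Submodule ℂ V)} {P : Finset (Finset (Submodule ℂ V))}
    (h : p ∈ P) : arrSpan p ≤ ⨆ q ∈ P, arrSpan q :=
  le_iSup₂_of_le p h le_rfl

/-- An irreducible subset of the ground set of an independent partition is contained in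
a single part. -/
lemma irreducible_subset_part {𝓗 : Finset (Submodule ℂ V)}
    {Q : Finset (Finset (Submodule ℂ V))}
    (hU : Q.biUnion id = 𝓗)
    (hind : ∀ q ∈ Q, Disjoint (arrSpan q) (⨆ r ∈ Q.erase q, arrSpan r))
    {p : Finset (Submodule ℂ V)} (hp : p ⊆ 𝓗) (hpne : p.Nonempty)
    (hirr : ArrIrreducible p) : ∃ q ∈ Q, p ⊆ q := by
  by_contra hcon
  push_neg at hcon
  obtain ⟨H₀, hH₀⟩ := hpne
  have hH₀𝓗 : H₀ ∈ Q.biUnion id := by rw [hU]; exact hp hH₀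
  obtain ⟨q₀, hq₀Q, hH₀q₀⟩ := Finset.mem_biUnion.1 hH₀𝓗
  apply hirr
  refine ⟨p ∩ q₀, p \ q₀, ⟨H₀, Finset.mem_inter.2 ⟨hH₀, hH₀q₀⟩⟩, ?_, ?_, ?_, ?_⟩
  · obtain ⟨H, hHp, hHq⟩ := Finset.not_subset.1 (hcon q₀ hq₀Q)
    exact ⟨H, Finset.mem_sdiff.2 ⟨hHp, hHq⟩⟩
  · exact Finset.disjoint_left.2 fun x hx hx' =>
      (Finset.mem_sdiff.1 hx').2 (Finset.mem_inter.1 hx).2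
  · ext x
    simp only [Finset.mem_union, Finset.mem_inter, Finset.mem_sdiff]
    tauto
  · have h1 : arrSpan (p ∩ q₀) ≤ arrSpan q₀ :=
      arrSpan_mono (Finset.inter_subset_right)
    have h2 : arrSpan (p \ q₀) ≤ ⨆ r ∈ Q.erase q₀, arrSpan r := by
      refine arrSpan_le fun H hH => ?_
      have hHp : H ∈ p := (Finset.mem_sdiff.1 hH).1
      have hHq : H ∉ q₀ := (Finset.mem_sdiff.1 hH).2
      obtain ⟨q, hqQ, hHq'⟩ := Finset.mem_biUnion.1 (by rw [hU]; exact hp hHp : H ∈ Q.biUnion id)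
      have hqne : q ≠ q₀ := fun h => hHq (h ▸ hHq')
      exact le_trans (ann_le_arrSpan hHq')
        (arrSpan_le_biSup (Finset.mem_erase.2 ⟨hqne, hqQ⟩))
    exact (hind q₀ hq₀Q).mono h1 h2

/-- Existence of an irreducible decomposition. -/
lemma exists_irredDecomp (𝓗 : Finset (Submodule ℂ V)) (hne : 𝓗.Nonempty) :
    ∃ P : Finset (Finset (Submodule ℂ V)), IsIrredDecomp 𝓗 P := by
  induction 𝓗 using Finset.strongInductionOn with
  | _ 𝓗 ih =>
  by_cases hirr : ArrIrreducible 𝓗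
  · refine ⟨{𝓗}, fun p hp => ?_, fun p hp q hq hpq => ?_, ?_, fun p hp => ?_, fun p hp => ?_⟩
    · rw [Finset.mem_singleton] at hp; exact hp ▸ hne
    · rw [Finset.mem_singleton] at hp hq; exact absurd (hp.trans hq.symm) hpq
    · simp
    · rw [Finset.mem_singleton] at hp
      subst hp
      simp only [Finset.erase_singleton]
      simpa using disjoint_bot_right
    · rw [Finset.mem_singleton] at hp; exact hp ▸ hirr
  · rw [ArrIrreducible, not_not] at hirr
    obtain ⟨𝓗₁, 𝓗₂, h1ne, h2ne, hdisj, hun, hspan⟩ := hirr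
    have hsub1 : 𝓗₁ ⊂ 𝓗 := by
      rw [← hun]
      refine ⟨Finset.subset_union_left, fun hsub => ?_⟩
      obtain ⟨x, hx⟩ := h2ne
      exact (Finset.disjoint_left.1 hdisj (hsub (Finset.mem_union_right _ hx)) hx)
    have hsub2 : 𝓗₂ ⊂ 𝓗 := by
      rw [← hun]
      refine ⟨Finset.subset_union_right, fun hsub => ?_⟩
      obtain ⟨x, hx⟩ := h1ne
      exact (Finset.disjoint_left.1 hdisj hx (hsub (Finset.mem_union_left _ hx)))
    obtain ⟨P₁, hP₁ne, hP₁dis, hP₁un, hP₁ind, hP₁irr⟩ := ih 𝓗₁ hsub1 h1ne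
    obtain ⟨P₂, hP₂ne, hP₂dis, hP₂un, hP₂ind, hP₂irr⟩ := ih 𝓗₂ hsub2 h2ne
    -- parts are subsets of the respective ground sets
    have hin1 : ∀ p ∈ P₁, p ⊆ 𝓗₁ := fun p hp =>
      hP₁un ▸ Finset.subset_biUnion_of_mem id hp
    have hin2 : ∀ p ∈ P₂, p ⊆ 𝓗₂ := fun p hp =>
      hP₂un ▸ Finset.subset_biUnion_of_mem id hp
    have hPP : ∀ p, p ∈ P₁ → p ∉ P₂ := by
      intro p hp1 hp2
      obtain ⟨x, hx⟩ := hP₁ne p hp1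
      exact Finset.disjoint_left.1 hdisj (hin1 p hp1 hx) (hin2 p hp2 hx)
    refine ⟨P₁ ∪ P₂, ?_, ?_, ?_, ?_, ?_⟩
    · intro p hp
      rcases Finset.mem_union.1 hp with h | h
      exacts [hP₁ne p h, hP₂ne p h]
    · intro p hp q hq hpq
      rcases Finset.mem_union.1 hp with h | h <;> rcases Finset.mem_union.1 hq with h' | h'
      · exact hP₁dis p h q h' hpq
      · exact Finset.disjoint_left.2 fun x hx hx' =>
          Finset.disjoint_left.1 hdisj (hin1 p h hx) (hin2 q h' hx')
      · exact Finset.disjoint_left.2 fun x hx hx' =>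
          Finset.disjoint_left.1 hdisj (hin1 q h' hx') (hin2 p h hx)
      · exact hP₂dis p h q h' hpq
    · rw [← hun, ← hP₁un, ← hP₂un]
      ext x
      simp only [Finset.mem_biUnion, Finset.mem_union, id]
      constructor
      · rintro ⟨a, ha | ha, hxa⟩
        exacts [Or.inl ⟨a, ha, hxa⟩, Or.inr ⟨a, ha, hxa⟩]
      · rintro (⟨a, ha, hxa⟩ | ⟨a, ha, hxa⟩)
        exacts [⟨a, Or.inl ha, hxa⟩, ⟨a, Or.inr ha, hxa⟩]
    · -- independence
      have key : ∀ (Pa Pb : Finset (Finset (Submodule ℂ V))) (𝓐 𝓑 : Finset (Submodule ℂ V)),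
          (∀ p ∈ Pa, p ⊆ 𝓐) → (∀ p ∈ Pb, p ⊆ 𝓑) →
          Disjoint (arrSpan 𝓐) (arrSpan 𝓑) →
          (∀ p ∈ Pa, Disjoint (arrSpan p) (⨆ q ∈ Pa.erase p, arrSpan q)) →
          ∀ p ∈ Pa, Disjoint (arrSpan p) (⨆ q ∈ (Pa ∪ Pb).erase p, arrSpan q) := by
        intro Pa Pb 𝓐 𝓑 hina hinb hAB hindA p hp
        have hle : (⨆ q ∈ (Pa ∪ Pb).erase p, arrSpan q) ≤
            (⨆ q ∈ Pa.erase p, arrSpan q) ⊔ (⨆ q ∈ Pb, arrSpan q) := by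
          refine biSup_arrSpan_le fun q hq => ?_
          have hq' := Finset.mem_erase.1 hq
          rcases Finset.mem_union.1 hq'.2 with h | h
          · exact le_sup_of_le_left (arrSpan_le_biSup (Finset.mem_erase.2 ⟨hq'.1, h⟩))
          · exact le_sup_of_le_right (arrSpan_le_biSup h)
        refine Disjoint.mono_right hle ?_
        refine Disjoint.disjoint_sup_right_of_disjoint_sup_left (hindA p hp) ?_
        refine hAB.mono ?_ (biSup_arrSpan_le fun q hq => arrSpan_mono (hinb q hq))
        refine sup_le (arrSpan_mono (hina p hp)) ?_
        exact biSup_arrSpan_le fun q hq => arrSpan_mono (hina q (Finset.mem_of_mem_erase hq))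
      intro p hp
      rcases Finset.mem_union.1 hp with h | h
      · exact key P₁ P₂ 𝓗₁ 𝓗₂ hin1 hin2 hspan hP₁ind p h
      · have := key P₂ P₁ 𝓗₂ 𝓗₁ hin2 hin1 hspan.symm hP₂ind p h
        refine this.mono_right (biSup_arrSpan_le fun q hq => ?_)
        have hq' := Finset.mem_erase.1 hq
        refine arrSpan_le_biSup (Finset.mem_erase.2 ⟨hq'.1, ?_⟩)
        rcases Finset.mem_union.1 hq'.2 with h' | h'
        exacts [Finset.mem_union_right _ h', Finset.mem_union_left _ h']
    · intro p hp
      rcases Finset.mem_union.1 hp with h | h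
      exacts [hP₁irr p h, hP₂irr p h]

/-- Every non-empty arrangement admits an irreducible decomposition,
unique up to relabelling of the parts (i.e. unique as a set of parts). -/
theorem existsUnique_irreducible_decomposition
    [FiniteDimensional ℂ V]
    (𝓗 : Finset (Submodule ℂ V)) (harr : IsArrangement 𝓗) (hne : 𝓗.Nonempty) :
    ∃! P : Finset (Finset (Submodule ℂ V)), IsIrredDecomp 𝓗 P := by
  obtain ⟨P, hP⟩ := exists_irredDecomp 𝓗 hne
  refine ⟨P, hP, fun Q hQ => ?_⟩
  obtain ⟨hPne, hPdis, hPun, hPind, hPirr⟩ := hP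
  obtain ⟨hQne, hQdis, hQun, hQind, hQirr⟩ := hQ
  have hsubP : ∀ p ∈ P, p ⊆ 𝓗 := fun p hp => hPun ▸ Finset.subset_biUnion_of_mem id hp
  have hsubQ : ∀ p ∈ Q, p ⊆ 𝓗 := fun p hp => hQun ▸ Finset.subset_biUnion_of_mem id hp
  have main : ∀ (A B : Finset (Finset (Submodule ℂ V))),
      (∀ p ∈ A, p.Nonempty) → (∀ p ∈ A, ∀ q ∈ A, p ≠ q → Disjoint p q) →
      (∀ p ∈ A, p ⊆ 𝓗) → (∀ p ∈ A, ArrIrreducible p) →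
      B.biUnion id = 𝓗 →
      (∀ q ∈ B, Disjoint (arrSpan q) (⨆ r ∈ B.erase q, arrSpan r)) →
      (∀ q ∈ B, q.Nonempty) →
      (∀ q ∈ B, ∀ r ∈ B, q ≠ r → Disjoint q r) →
      (∀ q ∈ B, q ⊆ 𝓗) → (∀ q ∈ B, ArrIrreducible q) →
      A.biUnion id = 𝓗 →
      (∀ p ∈ A, Disjoint (arrSpan p) (⨆ r ∈ A.erase p, arrSpan r)) →
      ∀ p ∈ A, p ∈ B := by
    intro A B hAne hAdis hAsub hAirr hBun hBind hBne hBdis hBsub hBirr hAun hAind p hpA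
    obtain ⟨q, hqB, hpq⟩ :=
      irreducible_subset_part hBun hBind (hAsub p hpA) (hAne p hpA) (hAirr p hpA)
    obtain ⟨p', hp'A, hqp'⟩ :=
      irreducible_subset_part hAun hAind (hBsub q hqB) (hBne q hqB) (hBirr q hqB)
    have hpp' : p = p' := by
      by_contra hne'
      obtain ⟨x, hx⟩ := hAne p hpA
      exact Finset.disjoint_left.1 (hAdis p hpA p' hp'A hne') hx (hqp' (hpq hx))
    have : p = q := Finset.Subset.antisymm hpq (hpp' ▸ hqp')
    exact this ▸ hqB
  apply Finset.Subset.antisymm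
  · intro p hp
    exact main Q P hQne hQdis hsubQ hQirr hPun hPind hPne hPdis hsubP hPirr hQun hQind p hp
  · intro p hp
    exact main P Q hPne hPdis hsubP hPirr hQun hQind hQne hQdis hsubQ hQirr hPun hPind p hp
end
end

section
/- Let (V, 𝓗) be an arrangement, H₀ ∈ 𝓗, with deleted arrangement 𝓗' = 𝓗 ∖ {H₀} and induced arrangement 𝓗'' = {H ∩ H₀ : H ∈ 𝓗'}. Let L'' ∈ 𝓛_irr(𝓗'') with L'' ⊊ H₀, and let L ∈ 𝓛(𝓗') be the common intersection of all H ∈ 𝓗' with L'' ⊆ H. Then exactly one of the following holds: (i) L'' ⊊ L, and then 𝓗_{L''} = 𝓗_L ⊎ {H₀} is a u-plus decomposition with 𝓗_L irreducible (so the irreducible components of L'' as an element of 𝓛(𝓗) are L and H₀); or (ii) L = L'' and L ∈ 𝓛_irr(𝓗). In both cases L is an irreducible intersection of 𝓗. -/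
open scoped Classical

noncomputable section

variable {V : Type*} [AddCommGroup V] [Module ℂ V]

/-- The intersection poset `𝓛(𝓗)`: all intersections of members of `𝓗`,
with `V` itself as the empty intersection. -/
def arrInters (𝓗 : Finset (Submodule ℂ V)) : Set (Submodule ℂ V) :=
  {L | ∃ S : Finset (Submodule ℂ V), S ⊆ 𝓗 ∧ L = ⨅ H ∈ S, H}

/-- The localization `𝓗_L = {H ∈ 𝓗 : L ⊆ H}`. -/
def arrLoc (𝓗 : Finset (Submodule ℂ V)) (L : Submodule ℂ V) : Finset (Submodule ℂ V) :=
  𝓗.filter fun H => L ≤ H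

/-- `L` is an irreducible intersection of `𝓗`: an intersection of (at least one of
the) members of `𝓗` whose localization `𝓗_L` is irreducible. -/
def IsIrredInter (𝓗 : Finset (Submodule ℂ V)) (L : Submodule ℂ V) : Prop :=
  L ∈ arrInters 𝓗 ∧ (arrLoc 𝓗 L).Nonempty ∧ ArrIrreducible (arrLoc 𝓗 L)

/-- The induced (restricted) arrangement `𝓗'' = {H ∩ H₀ : H ∈ 𝓗 \ {H₀}}`, viewed as
an arrangement of hyperplanes in the vector space `H₀`. -/
def inducedArr (𝓗 : Finset (Submodule ℂ V)) (H₀ : Submodule ℂ V) :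
    Finset (Submodule ℂ ↥H₀) :=
  (𝓗.erase H₀).image fun H => Submodule.comap H₀.subtype H

/-! ### Auxiliary lemmas -/

lemma IsHyperplane.ne_top {H : Submodule ℂ V} (h : IsHyperplane H) : H ≠ ⊤ := by
  obtain ⟨f, hf, rfl⟩ := h
  exact fun htop => hf (LinearMap.ker_eq_top.mp htop)

lemma IsHyperplane.sup_eq_top {H L : Submodule ℂ V} (h : IsHyperplane H) (hL : ¬ L ≤ H) :
    L ⊔ H = ⊤ := by
  obtain ⟨f, hf, rfl⟩ := h
  obtain ⟨x, hxL, hfx⟩ : ∃ x ∈ L, f x ≠ 0 := by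
    by_contra hc
    push_neg at hc
    exact hL fun y hy => hc y hy
  rw [eq_top_iff]
  intro y _
  have hmem : y - (f y / f x) • x ∈ LinearMap.ker f := by
    simp [LinearMap.mem_ker, map_sub, map_smul, div_mul_cancel₀, hfx]
  have hsplit : y = (f y / f x) • x + (y - (f y / f x) • x) := by abel
  rw [hsplit]
  exact Submodule.add_mem _ (Submodule.mem_sup_left (Submodule.smul_mem _ _ hxL))
    (Submodule.mem_sup_right hmem)

lemma IsHyperplane.eq_of_le {H₁ H₂ : Submodule ℂ V} (h1 : IsHyperplane H₁)
    (h2 : IsHyperplane H₂) (hle : H₁ ≤ H₂) : H₁ = H₂ := by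
  by_contra hne
  have h21 : ¬ H₂ ≤ H₁ := fun h => hne (le_antisymm hle h)
  have htop := h1.sup_eq_top h21
  rw [sup_eq_left.mpr hle] at htop
  exact h2.ne_top htop

lemma ann_ne_bot {W : Type*} [AddCommGroup W] [Module ℂ W] {K : Submodule ℂ W}
    (h : K ≠ ⊤) : K.dualAnnihilator ≠ ⊥ := by
  obtain ⟨f, hf, hmap⟩ := K.exists_dual_map_eq_bot_of_lt_top (lt_top_iff_ne_top.2 h)
    inferInstance
  intro hbot
  apply hf
  have hfm : f ∈ K.dualAnnihilator := by
    rw [Submodule.mem_dualAnnihilator]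
    intro w hw
    have : f w ∈ K.map f := Submodule.mem_map_of_mem hw
    simpa [hmap] using this
  rw [hbot] at hfm
  simpa using hfm

lemma dualMap_eq_zero_iff (H₀ : Submodule ℂ V) (f : Module.Dual ℂ V) :
    H₀.subtype.dualMap f = 0 ↔ f ∈ H₀.dualAnnihilator := by
  rw [Submodule.mem_dualAnnihilator]
  constructor
  · intro h w hw
    simpa using LinearMap.congr_fun h ⟨w, hw⟩
  · intro h
    ext x
    exact h x.1 x.2

lemma ann_comap_le (H₀ : Submodule ℂ V) {H : Submodule ℂ V} (hH : IsHyperplane H) :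
    (H.comap H₀.subtype).dualAnnihilator ≤ H.dualAnnihilator.map H₀.subtype.dualMap := by
  obtain ⟨h, hne, rfl⟩ := hH
  by_cases hcase : H₀ ≤ LinearMap.ker h
  · rw [Submodule.comap_subtype_eq_top.2 hcase, Submodule.dualAnnihilator_top]
    exact bot_le
  · obtain ⟨x, hx0, hxk⟩ : ∃ x ∈ H₀, h x ≠ 0 := by
      by_contra hc
      push_neg at hc
      exact hcase fun y hy => hc y hy
    intro g hg
    rw [Submodule.mem_dualAnnihilator] at hg
    refine ⟨(g ⟨x, hx0⟩ / h x) • h, Submodule.smul_mem _ _ ?_, ?_⟩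
    · rw [Submodule.mem_dualAnnihilator]
      intro w hw
      exact hw
    · ext y
      have hy : (y : V) - (h y / h x) • x ∈ LinearMap.ker h := by
        simp [LinearMap.mem_ker, map_sub, map_smul, div_mul_cancel₀, hxk]
      have hmem : y - (h (y : V) / h x) • (⟨x, hx0⟩ : H₀) ∈
          (LinearMap.ker h).comap H₀.subtype := by
        simpa [Submodule.mem_comap] using hy
      have hgz := hg _ hmem
      simp only [map_sub, map_smul, smul_eq_mul, sub_eq_zero] at hgz
      simp only [LinearMap.dualMap_apply, LinearMap.smul_apply, smul_eq_mul,
        Submodule.coe_subtype]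
      rw [hgz]
      field_simp

lemma ann_mem_le_arrSpan {s : Finset (Submodule ℂ V)} {H : Submodule ℂ V} (h : H ∈ s) :
    H.dualAnnihilator ≤ arrSpan s :=
  le_iSup₂_of_le H h le_rfl

lemma arrSpan_le_ann {s : Finset (Submodule ℂ V)} {L : Submodule ℂ V}
    (h : ∀ H ∈ s, L ≤ H) : arrSpan s ≤ L.dualAnnihilator :=
  iSup₂_le fun H hH => Submodule.dualAnnihilator_anti (h H hH)

lemma ann_biInf [FiniteDimensional ℂ V] (S : Finset (Submodule ℂ V)) :
    (⨅ H ∈ S, H).dualAnnihilator = arrSpan S := by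
  rw [arrSpan]
  rw [iInf_subtype', iSup_subtype']
  exact Subspace.dualAnnihilator_iInf_eq _

lemma image_loc (𝓗 : Finset (Submodule ℂ V)) (H₀ : Submodule ℂ V)
    (L'' : Submodule ℂ ↥H₀) :
    ((𝓗.erase H₀).filter (fun H => Submodule.map H₀.subtype L'' ≤ H)).image
        (fun H => Submodule.comap H₀.subtype H)
      = arrLoc (inducedArr 𝓗 H₀) L'' := by
  ext K
  simp only [Finset.mem_image, Finset.mem_filter, arrLoc, inducedArr]
  constructor
  · rintro ⟨H, ⟨hH, hle⟩, rfl⟩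
    exact ⟨⟨H, hH, rfl⟩, Submodule.map_le_iff_le_comap.mp hle⟩
  · rintro ⟨⟨H, hH, rfl⟩, hle⟩
    exact ⟨H, ⟨hH, Submodule.map_le_iff_le_comap.mpr hle⟩, rfl⟩

lemma transfer (𝓗 : Finset (Submodule ℂ V)) (harr : IsArrangement 𝓗)
    (H₀ : Submodule ℂ V) (h₀ : H₀ ∈ 𝓗) (L'' : Submodule ℂ ↥H₀)
    (A B : Finset (Submodule ℂ V)) (WA WB : Submodule ℂ (Module.Dual ℂ V))
    (hA : A.Nonempty) (hB : B.Nonempty)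
    (hAB : A ∪ B = (𝓗.erase H₀).filter (fun H => Submodule.map H₀.subtype L'' ≤ H))
    (hWA : arrSpan A ≤ WA) (hWB : arrSpan B ≤ WB)
    (hdisj : Disjoint WA WB)
    (hkey : H₀.dualAnnihilator ⊓ (WA ⊔ WB) ≤ WA) :
    ArrReducible (arrLoc (inducedArr 𝓗 H₀) L'') := by
  classical
  set S := (𝓗.erase H₀).filter (fun H => Submodule.map H₀.subtype L'' ≤ H) with hSdef
  have hAs : A ⊆ S := hAB ▸ Finset.subset_union_left
  have hBs : B ⊆ S := hAB ▸ Finset.subset_union_right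
  have hS𝓗 : ∀ H ∈ S, H ∈ 𝓗 ∧ H ≠ H₀ := by
    intro H hH
    have := (Finset.mem_filter.mp hH).1
    exact ⟨Finset.mem_of_mem_erase this, Finset.ne_of_mem_erase this⟩
  set cmap := fun H : Submodule ℂ V => Submodule.comap H₀.subtype H with hcmap
  have himg : ∀ (C : Finset (Submodule ℂ V)) (WC : Submodule ℂ (Module.Dual ℂ V)),
      C ⊆ S → arrSpan C ≤ WC →
      arrSpan (C.image cmap) ≤ WC.map H₀.subtype.dualMap := by
    intro C WC hCs hCW
    refine iSup₂_le fun K hK => ?_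
    obtain ⟨H, hHC, rfl⟩ := Finset.mem_image.mp hK
    refine le_trans (ann_comap_le H₀ (harr H (hS𝓗 H (hCs hHC)).1)) (Submodule.map_mono ?_)
    exact le_trans (ann_mem_le_arrSpan hHC) hCW
  have hsd : Disjoint (arrSpan (A.image cmap)) (arrSpan (B.image cmap)) := by
    rw [Submodule.disjoint_def]
    intro g hgA hgB
    obtain ⟨a, haWA, hra⟩ := himg A WA hAs hWA hgA
    obtain ⟨b, hbWB, hrb⟩ := himg B WB hBs hWB hgB
    have hab : a - b ∈ H₀.dualAnnihilator := by
      rw [← dualMap_eq_zero_iff, map_sub, hra, hrb, sub_self]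
    have habWA : a - b ∈ WA := hkey (Submodule.mem_inf.mpr ⟨hab,
      Submodule.sub_mem _ (Submodule.mem_sup_left haWA) (Submodule.mem_sup_right hbWB)⟩)
    have hbWA : b ∈ WA := by
      have h2 : a - (a - b) ∈ WA := Submodule.sub_mem _ haWA habWA
      simpa using h2
    have hb0 : b = 0 := (Submodule.disjoint_def.mp hdisj) b hbWA hbWB
    rw [← hrb, hb0, map_zero]
  have hfd : Disjoint (A.image cmap) (B.image cmap) := by
    rw [Finset.disjoint_left]
    intro K hKA hKB
    have h1 : K.dualAnnihilator = ⊥ := le_bot_iff.mp (le_trans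
      (le_inf (ann_mem_le_arrSpan hKA) (ann_mem_le_arrSpan hKB)) hsd.le_bot)
    obtain ⟨H, hHA, rfl⟩ := Finset.mem_image.mp hKA
    refine ann_ne_bot ?_ h1
    intro htop
    exact (hS𝓗 H (hAs hHA)).2 ((harr H₀ h₀).eq_of_le (harr H (hS𝓗 H (hAs hHA)).1)
      (Submodule.comap_subtype_eq_top.mp htop)).symm
  refine ⟨A.image cmap, B.image cmap, hA.image _, hB.image _, hfd, ?_, hsd⟩
  rw [← Finset.image_union, hAB, hSdef]
  exact image_loc 𝓗 H₀ L''

lemma caseii_aux [FiniteDimensional ℂ V] (𝓗 : Finset (Submodule ℂ V))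
    (harr : IsArrangement 𝓗) (H₀ : Submodule ℂ V) (h₀ : H₀ ∈ 𝓗)
    (L'' : Submodule ℂ ↥H₀)
    (hirr'' : ¬ ArrReducible (arrLoc (inducedArr 𝓗 H₀) L''))
    (L : Submodule ℂ V) (hLH₀ : L ≤ H₀)
    (hLinf : L = ⨅ H ∈ (𝓗.erase H₀).filter
        (fun H => Submodule.map H₀.subtype L'' ≤ H), H)
    (hloc : arrLoc 𝓗 L = insert H₀ ((𝓗.erase H₀).filter
        (fun H => Submodule.map H₀.subtype L'' ≤ H)))
    (A B : Finset (Submodule ℂ V)) (hAne : A.Nonempty) (hBne : B.Nonempty)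
    (hd : Disjoint A B) (hu : A ∪ B = arrLoc 𝓗 L)
    (hs : Disjoint (arrSpan A) (arrSpan B)) (hH₀A : H₀ ∈ A) : False := by
  classical
  set S := (𝓗.erase H₀).filter (fun H => Submodule.map H₀.subtype L'' ≤ H) with hSdef
  have hH₀S : H₀ ∉ S := fun h => (Finset.mem_erase.mp (Finset.mem_filter.mp h).1).1 rfl
  have hH₀B : H₀ ∉ B := Finset.disjoint_left.mp hd hH₀A
  have hA'B : A.erase H₀ ∪ B = S := by
    have h1 := congrArg (fun t => Finset.erase t H₀) hu
    rw [Finset.erase_union_distrib, Finset.erase_eq_of_notMem hH₀B, hloc,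
      Finset.erase_insert hH₀S] at h1
    exact h1
  by_cases hA' : (A.erase H₀).Nonempty
  · exact hirr'' (transfer 𝓗 harr H₀ h₀ L'' (A.erase H₀) B (arrSpan A) (arrSpan B)
      hA' hBne hA'B (arrSpan_mono (Finset.erase_subset _ _)) le_rfl hs
      (le_trans inf_le_left (ann_mem_le_arrSpan hH₀A)))
  · rw [Finset.not_nonempty_iff_eq_empty] at hA'
    have hBS : B = S := by rw [← hA'B, hA', Finset.empty_union]
    have h1 : H₀.dualAnnihilator ≤ arrSpan B := by
      rw [hBS, ← ann_biInf, ← hLinf]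
      exact Submodule.dualAnnihilator_anti hLH₀
    have h2 : H₀.dualAnnihilator ≤ arrSpan A := ann_mem_le_arrSpan hH₀A
    have h3 : H₀.dualAnnihilator = ⊥ := le_bot_iff.mp (le_trans (le_inf h2 h1) hs.le_bot)
    exact ann_ne_bot (harr H₀ h₀).ne_top h3

/-- Let `L''` be an irreducible intersection of the induced
arrangement `𝓗''` on `H₀` with `L'' ⊊ H₀`, and let `L` be the common intersection of
all hyperplanes of `𝓗' = 𝓗 \ {H₀}` containing `L''`. Then `L` is an irreducible
intersection of `𝓗`, and either (i) `L'' ⊊ L` and `𝓗_{L''} = 𝓗_L ⊎ {H₀}` is a u-plus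
decomposition, or (ii) `L = L''`. -/
theorem induced_irreducible_intersection_dichotomy
    [FiniteDimensional ℂ V]
    (𝓗 : Finset (Submodule ℂ V)) (harr : IsArrangement 𝓗)
    (H₀ : Submodule ℂ V) (h₀ : H₀ ∈ 𝓗)
    (L'' : Submodule ℂ ↥H₀)
    (hL'' : IsIrredInter (inducedArr 𝓗 H₀) L'') (hproper : L'' ≠ ⊤)
    (L : Submodule ℂ V)
    (hLdef : L = ⨅ H ∈ (𝓗.erase H₀).filter
        (fun H => Submodule.map H₀.subtype L'' ≤ H), H) :
    IsIrredInter 𝓗 L ∧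
      ((Submodule.map H₀.subtype L'' < L ∧
          arrLoc 𝓗 (Submodule.map H₀.subtype L'') = insert H₀ (arrLoc 𝓗 L) ∧
          H₀ ∉ arrLoc 𝓗 L ∧
          Disjoint (arrSpan (arrLoc 𝓗 L)) (arrSpan {H₀})) ∨
        L = Submodule.map H₀.subtype L'') := by
  classical
  set S := (𝓗.erase H₀).filter (fun H => Submodule.map H₀.subtype L'' ≤ H) with hSdef
  have hSmem : ∀ H : Submodule ℂ V,
      H ∈ S ↔ H ≠ H₀ ∧ H ∈ 𝓗 ∧ Submodule.map H₀.subtype L'' ≤ H := by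
    intro H
    rw [hSdef, Finset.mem_filter, Finset.mem_erase]
    tauto
  have hSsub : S ⊆ 𝓗 := fun H hH => ((hSmem H).mp hH).2.1
  have hML : Submodule.map H₀.subtype L'' ≤ L := by
    rw [hLdef]
    exact le_iInf₂ fun H hH => ((hSmem H).mp hH).2.2
  have hLleS : ∀ H ∈ S, L ≤ H := by
    intro H hH
    rw [hLdef]
    exact iInf₂_le H hH
  obtain ⟨K₀, hK₀⟩ := hL''.2.1
  have hK0 := Finset.mem_filter.mp hK₀
  obtain ⟨H₁, hH₁e, hH₁K⟩ := Finset.mem_image.mp hK0.1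
  have hH₁S : H₁ ∈ S := by
    have h2 := hK0.2
    rw [← hH₁K] at h2
    exact Finset.mem_filter.mpr ⟨hH₁e, Submodule.map_le_iff_le_comap.mpr h2⟩
  have hSloc : S ⊆ arrLoc 𝓗 L := fun H hH =>
    Finset.mem_filter.mpr ⟨hSsub hH, hLleS H hH⟩
  have hIsInter : L ∈ arrInters 𝓗 := ⟨S, hSsub, hLdef⟩
  have hLocne : (arrLoc 𝓗 L).Nonempty := ⟨H₁, hSloc hH₁S⟩
  have hL''inf : L'' = ⨅ K ∈ arrLoc (inducedArr 𝓗 H₀) L'', K := by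
    obtain ⟨T, hT, hTinf⟩ := hL''.1
    refine le_antisymm (le_iInf₂ fun K hK => (Finset.mem_filter.mp hK).2) ?_
    have hTsub : T ⊆ arrLoc (inducedArr 𝓗 H₀) L'' := by
      intro K hK
      refine Finset.mem_filter.mpr ⟨hT hK, ?_⟩
      exact le_of_eq_of_le hTinf (iInf₂_le K hK)
    exact le_trans (le_iInf₂ fun K hK => iInf₂_le K (hTsub hK)) (le_of_eq hTinf.symm)
  have hcomapL : Submodule.comap H₀.subtype L = L'' := by
    rw [hLdef]
    have h1 : Submodule.comap H₀.subtype (⨅ H ∈ S, H)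
        = ⨅ H ∈ S, Submodule.comap H₀.subtype H := by
      ext x
      simp [Submodule.mem_iInf]
    have h2 : (⨅ H ∈ S, Submodule.comap H₀.subtype H)
        = ⨅ K ∈ S.image (fun H => Submodule.comap H₀.subtype H), K := by
      rw [← Finset.inf_eq_iInf, ← Finset.inf_eq_iInf, Finset.inf_image]
      rfl
    rw [h1, h2, hSdef, image_loc, ← hL''inf]
  by_cases hcase : L ≤ H₀
  · -- case (ii) : L = map L''
    have hLM : L = Submodule.map H₀.subtype L'' := by
      have h3 := Submodule.map_comap_subtype H₀ L
      rw [hcomapL, inf_eq_right.mpr hcase] at h3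
      exact h3.symm
    have hloc : arrLoc 𝓗 L = insert H₀ S := by
      ext H
      rw [Finset.mem_insert]
      simp only [arrLoc, Finset.mem_filter]
      constructor
      · rintro ⟨hH𝓗, hLH⟩
        by_cases hH : H = H₀
        · exact Or.inl hH
        · exact Or.inr ((hSmem H).mpr ⟨hH, hH𝓗, (le_of_eq hLM.symm).trans hLH⟩)
      · rintro (rfl | hHS)
        · exact ⟨h₀, hcase⟩
        · exact ⟨hSsub hHS, hLleS H hHS⟩
    have hirr : ArrIrreducible (arrLoc 𝓗 L) := by
      rintro ⟨A, B, hAne, hBne, hABd, hABu, hABs⟩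
      have hH₀mem : H₀ ∈ A ∪ B := by
        rw [hABu, hloc]
        exact Finset.mem_insert_self H₀ S
      have hloc' : arrLoc 𝓗 L = insert H₀ ((𝓗.erase H₀).filter
          (fun H => Submodule.map H₀.subtype L'' ≤ H)) := by
        rw [hloc, hSdef]
      have hLinf' : L = ⨅ H ∈ (𝓗.erase H₀).filter
          (fun H => Submodule.map H₀.subtype L'' ≤ H), H := by
        rw [hLdef, hSdef]
      rcases Finset.mem_union.mp hH₀mem with hA | hB
      · exact caseii_aux 𝓗 harr H₀ h₀ L'' hL''.2.2 L hcase hLinf' hloc'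
          A B hAne hBne hABd hABu hABs hA
      · exact caseii_aux 𝓗 harr H₀ h₀ L'' hL''.2.2 L hcase hLinf' hloc'
          B A hBne hAne hABd.symm (by rw [Finset.union_comm, hABu]) hABs.symm hB
    exact ⟨⟨hIsInter, hLocne, hirr⟩, Or.inr hLM⟩
  · -- case (i)
    have hlocS : arrLoc 𝓗 L = S := by
      ext H
      simp only [arrLoc, Finset.mem_filter]
      rw [hSmem H]
      constructor
      · rintro ⟨hH𝓗, hLH⟩
        refine ⟨?_, hH𝓗, le_trans hML hLH⟩
        rintro rfl
        exact hcase hLH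
      · rintro ⟨hne, hH𝓗, hMH⟩
        exact ⟨hH𝓗, hLleS H ((hSmem H).mpr ⟨hne, hH𝓗, hMH⟩)⟩
    have hannL : H₀.dualAnnihilator ⊓ L.dualAnnihilator = ⊥ := by
      rw [← Submodule.dualAnnihilator_sup_eq, sup_comm,
        (harr H₀ h₀).sup_eq_top hcase, Submodule.dualAnnihilator_top]
    have hdisj2 : Disjoint (arrSpan (arrLoc 𝓗 L)) (arrSpan {H₀}) := by
      have hx : arrSpan ({H₀} : Finset (Submodule ℂ V)) = H₀.dualAnnihilator := by
        simp [arrSpan]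
      rw [hx, disjoint_iff]
      refine le_antisymm ?_ bot_le
      calc arrSpan (arrLoc 𝓗 L) ⊓ H₀.dualAnnihilator
          ≤ L.dualAnnihilator ⊓ H₀.dualAnnihilator :=
            inf_le_inf_right _ (arrSpan_le_ann fun H hH => (Finset.mem_filter.mp hH).2)
        _ = ⊥ := by rw [inf_comm, hannL]
    have hirr : ArrIrreducible (arrLoc 𝓗 L) := by
      rintro ⟨A, B, hAne, hBne, hABd, hABu, hABs⟩
      have hAloc : ∀ H ∈ A, L ≤ H := fun H hH =>
        (Finset.mem_filter.mp (hABu ▸ Finset.mem_union_left B hH)).2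
      have hBloc : ∀ H ∈ B, L ≤ H := fun H hH =>
        (Finset.mem_filter.mp (hABu ▸ Finset.mem_union_right A hH)).2
      refine hL''.2.2 (transfer 𝓗 harr H₀ h₀ L'' A B (arrSpan A) (arrSpan B)
        hAne hBne ?_ le_rfl le_rfl hABs ?_)
      · rw [hABu, hlocS, hSdef]
      · have hsup : arrSpan A ⊔ arrSpan B ≤ L.dualAnnihilator :=
          sup_le (arrSpan_le_ann hAloc) (arrSpan_le_ann hBloc)
        calc H₀.dualAnnihilator ⊓ (arrSpan A ⊔ arrSpan B)
            ≤ H₀.dualAnnihilator ⊓ L.dualAnnihilator := inf_le_inf_left _ hsup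
          _ = ⊥ := hannL
          _ ≤ arrSpan A := bot_le
    refine ⟨⟨hIsInter, hLocne, hirr⟩, Or.inl ⟨?_, ?_, ?_, hdisj2⟩⟩
    · exact lt_of_le_of_ne hML fun h => hcase (h ▸ Submodule.map_subtype_le H₀ L'')
    · rw [hlocS]
      ext H
      rw [Finset.mem_insert]
      simp only [arrLoc, Finset.mem_filter]
      rw [hSmem H]
      constructor
      · rintro ⟨hH𝓗, hMH⟩
        by_cases hH : H = H₀
        · exact Or.inl hH
        · exact Or.inr ⟨hH, hH𝓗, hMH⟩
      · rintro (hH | ⟨hne, hH𝓗, hMH⟩)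
        · rw [hH]
          exact ⟨h₀, Submodule.map_subtype_le H₀ L''⟩
        · exact ⟨hH𝓗, hMH⟩
    · intro hmem
      exact hcase (Finset.mem_filter.mp hmem).2
end
end

section
/- Let (V, 𝓗) be an essential and irreducible arrangement with dim V ≥ 2. Then there exists a hyperplane H₀ ∈ 𝓗 such that the induced arrangement 𝓗'' = {H ∩ H₀ : H ∈ 𝓗 ∖ {H₀}}, viewed as an arrangement of hyperplanes in the vector space H₀, is also essential and irreducible. -/
open scoped Classical

noncomputable section

variable {V : Type*} [AddCommGroup V] [Module ℂ V]

open Module Submodule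

set_option linter.unusedSectionVars false

namespace ArrAux

variable {W : Type*} [AddCommGroup W] [Module ℂ W]

/-- span of a finite set of submodules -/
def sSpan (S : Finset (Submodule ℂ W)) : Submodule ℂ W := S.sup id

/-- connectivity of a finite set of submodules -/
def Conn (S : Finset (Submodule ℂ W)) : Prop :=
  ∀ P Q : Finset (Submodule ℂ W), P.Nonempty → Q.Nonempty → Disjoint P Q → P ∪ Q = S →
    ¬ Disjoint (sSpan P) (sSpan Q)

/-- contraction at an element -/
def contr (S : Finset (Submodule ℂ W)) (e : Submodule ℂ W) :
    Finset (Submodule ℂ (W ⧸ e)) :=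
  (S.erase e).image (Submodule.map e.mkQ)

lemma le_sSpan {S : Finset (Submodule ℂ W)} {ℓ : Submodule ℂ W} (h : ℓ ∈ S) : ℓ ≤ sSpan S :=
  Finset.le_sup (f := id) h

lemma sSpan_mono {S T : Finset (Submodule ℂ W)} (h : S ⊆ T) : sSpan S ≤ sSpan T :=
  Finset.sup_mono h

lemma sSpan_le {S : Finset (Submodule ℂ W)} {N : Submodule ℂ W} (h : ∀ ℓ ∈ S, ℓ ≤ N) :
    sSpan S ≤ N := Finset.sup_le h

lemma sSpan_union (S T : Finset (Submodule ℂ W)) : sSpan (S ∪ T) = sSpan S ⊔ sSpan T :=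
  Finset.sup_union

lemma sSpan_insert (e : Submodule ℂ W) (S : Finset (Submodule ℂ W)) :
    sSpan (insert e S) = e ⊔ sSpan S := Finset.sup_insert

lemma sSpan_map {W₂ : Type*} [AddCommGroup W₂] [Module ℂ W₂] (f : W →ₗ[ℂ] W₂)
    (S : Finset (Submodule ℂ W)) :
    sSpan (S.image (Submodule.map f)) = Submodule.map f (sSpan S) := by
  rw [sSpan, Finset.sup_image]
  exact (Finset.comp_sup_eq_sup_comp (Submodule.map f)
    (fun x y => Submodule.map_sup x y f) (Submodule.map_bot f)).symm

lemma conn_of_card_le_one {S : Finset (Submodule ℂ W)} (h : S.card ≤ 1) : Conn S := by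
  intro P Q hP hQ hd hu hdisj
  have : 2 ≤ S.card := by
    rw [← hu, Finset.card_union_of_disjoint hd]
    have := Finset.card_pos.mpr hP
    have := Finset.card_pos.mpr hQ
    omega
  omega

variable [FiniteDimensional ℂ W]

lemma line_ne_bot {ℓ : Submodule ℂ W} (h : finrank ℂ ℓ = 1) : ℓ ≠ ⊥ := by
  intro hb; rw [hb, finrank_bot] at h; omega

lemma eq_of_le_line {N ℓ : Submodule ℂ W} (hle : N ≤ ℓ) (h : finrank ℂ ℓ = 1) (hN : N ≠ ⊥) :
    N = ℓ := by
  apply Submodule.eq_of_le_of_finrank_le hle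
  have h1 : finrank ℂ N ≠ 0 := fun h0 => hN (Submodule.finrank_eq_zero.mp h0)
  omega

lemma line_inf_eq_bot {ℓ₁ ℓ₂ : Submodule ℂ W} (h1 : finrank ℂ ℓ₁ = 1) (h2 : finrank ℂ ℓ₂ = 1)
    (hne : ℓ₁ ≠ ℓ₂) : ℓ₁ ⊓ ℓ₂ = ⊥ := by
  by_contra hb
  have e1 : ℓ₁ ⊓ ℓ₂ = ℓ₁ := eq_of_le_line inf_le_left h1 hb
  have e2 : ℓ₁ ⊓ ℓ₂ = ℓ₂ := eq_of_le_line inf_le_right h2 hb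
  exact hne (e1.symm.trans e2)

lemma two_le_finrank {N e ℓ : Submodule ℂ W} (he : e ≤ N) (hℓ : ℓ ≤ N)
    (h1 : finrank ℂ ℓ = 1) (h2 : finrank ℂ e = 1) (hne : ℓ ≠ e) : 2 ≤ finrank ℂ N := by
  have hsum := Submodule.finrank_sup_add_finrank_inf_eq ℓ e
  rw [line_inf_eq_bot h1 h2 hne, finrank_bot, h1, h2] at hsum
  have hle : finrank ℂ ↥(ℓ ⊔ e) ≤ finrank ℂ N := Submodule.finrank_mono (sup_le hℓ he)
  omega

lemma one_lt_card {S : Finset (Submodule ℂ W)} (hl : ∀ m ∈ S, finrank ℂ m = 1)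
    (hr : 2 ≤ finrank ℂ (sSpan S)) : 1 < S.card := by
  by_contra h
  push_neg at h
  rcases Finset.card_le_one_iff_subset_singleton.mp h with ⟨ℓ, hsub⟩
  rcases Finset.subset_singleton_iff.mp hsub with hS | hS
  · rw [hS] at hr
    simp only [sSpan, Finset.sup_empty, finrank_bot] at hr
    change 2 ≤ finrank ℂ ↥(sSpan (∅ : Finset (Submodule ℂ W))) at hr
    rw [show sSpan (∅ : Finset (Submodule ℂ W)) = ⊥ from Finset.sup_empty, finrank_bot] at hr
    simp at hr
  · have hℓ : finrank ℂ ℓ = 1 := hl ℓ (by rw [hS]; exact Finset.mem_singleton_self ℓ)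
    rw [hS, sSpan, Finset.sup_singleton] at hr
    simp only [id] at hr
    omega

end ArrAux

namespace ArrAux

variable {W : Type*} [AddCommGroup W] [Module ℂ W] [FiniteDimensional ℂ W]

lemma map_mkQ_ne_bot {e ℓ : Submodule ℂ W} (h1 : finrank ℂ ℓ = 1) (h2 : finrank ℂ e = 1)
    (hne : ℓ ≠ e) : Submodule.map e.mkQ ℓ ≠ ⊥ := by
  intro hb
  rcases (Submodule.ne_bot_iff ℓ).mp (line_ne_bot h1) with ⟨x, hx, hx0⟩
  have hmem : e.mkQ x ∈ Submodule.map e.mkQ ℓ := Submodule.mem_map_of_mem hx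
  rw [hb, Submodule.mem_bot] at hmem
  have hxe : x ∈ e := by rwa [Submodule.mkQ_apply, Submodule.Quotient.mk_eq_zero] at hmem
  have : x ∈ ℓ ⊓ e := ⟨hx, hxe⟩
  rw [line_inf_eq_bot h1 h2 hne, Submodule.mem_bot] at this
  exact hx0 this

lemma upgrade {S : Finset (Submodule ℂ W)} (hconn : Conn S)
    {e : Submodule ℂ W} (he : e ∈ S) (heline : finrank ℂ e = 1)
    (hnc : ¬ Conn (contr S e)) :
    ∃ A B : Finset (Submodule ℂ W), A.Nonempty ∧ B.Nonempty ∧ Disjoint A B ∧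
      A ∪ B = S.erase e ∧ e ≤ sSpan A ∧ e ≤ sSpan B ∧ sSpan A ⊓ sSpan B = e := by
  unfold Conn at hnc
  push_neg at hnc
  obtain ⟨P, Q, hPne, hQne, hPQ, hun, hdisj⟩ := hnc
  set A := (S.erase e).filter (fun ℓ => Submodule.map e.mkQ ℓ ∈ P) with hA_def
  set B := (S.erase e).filter (fun ℓ => Submodule.map e.mkQ ℓ ∉ P) with hB_def
  have hABun : A ∪ B = S.erase e := Finset.filter_union_filter_not_eq _ _
  have hABdisj : Disjoint A B := by
    rw [Finset.disjoint_left]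
    intro x hx hx'
    exact (Finset.mem_filter.mp hx').2 (Finset.mem_filter.mp hx).2
  have hAne : A.Nonempty := by
    obtain ⟨m, hm⟩ := hPne
    have : m ∈ contr S e := by rw [← hun]; exact Finset.mem_union_left _ hm
    obtain ⟨ℓ, hℓ, hℓm⟩ := Finset.mem_image.mp this
    exact ⟨ℓ, Finset.mem_filter.mpr ⟨hℓ, by rw [hℓm]; exact hm⟩⟩
  have hBne : B.Nonempty := by
    obtain ⟨m, hm⟩ := hQne
    have : m ∈ contr S e := by rw [← hun]; exact Finset.mem_union_right _ hm
    obtain ⟨ℓ, hℓ, hℓm⟩ := Finset.mem_image.mp this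
    exact ⟨ℓ, Finset.mem_filter.mpr ⟨hℓ, by rw [hℓm]; exact Finset.disjoint_right.mp hPQ hm⟩⟩
  have hAspan : Submodule.map e.mkQ (sSpan A) ≤ sSpan P := by
    rw [← sSpan_map]
    apply sSpan_mono
    intro x hx
    obtain ⟨ℓ, hℓ, rfl⟩ := Finset.mem_image.mp hx
    exact (Finset.mem_filter.mp hℓ).2
  have hBspan : Submodule.map e.mkQ (sSpan B) ≤ sSpan Q := by
    rw [← sSpan_map]
    apply sSpan_mono
    intro x hx
    obtain ⟨ℓ, hℓ, rfl⟩ := Finset.mem_image.mp hx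
    have h1 := Finset.mem_filter.mp hℓ
    have : Submodule.map e.mkQ ℓ ∈ contr S e := Finset.mem_image_of_mem _ h1.1
    rw [← hun, Finset.mem_union] at this
    exact this.resolve_left h1.2
  have key : ∀ x : W, x ∈ sSpan A ⊔ e → x ∈ sSpan B ⊔ e → x ∈ e := by
    intro x h1 h2
    obtain ⟨a, ha, u, hu, hau⟩ := Submodule.mem_sup.mp h1
    obtain ⟨b, hb, v, hv, hbv⟩ := Submodule.mem_sup.mp h2
    have hu0 : e.mkQ u = 0 := (Submodule.Quotient.mk_eq_zero e).mpr hu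
    have hv0 : e.mkQ v = 0 := (Submodule.Quotient.mk_eq_zero e).mpr hv
    have hqa : e.mkQ x = e.mkQ a := by rw [← hau, map_add, hu0, add_zero]
    have hqb : e.mkQ x = e.mkQ b := by rw [← hbv, map_add, hv0, add_zero]
    have hxP : e.mkQ x ∈ sSpan P := hqa ▸ hAspan (Submodule.mem_map_of_mem ha)
    have hxQ : e.mkQ x ∈ sSpan Q := hqb ▸ hBspan (Submodule.mem_map_of_mem hb)
    have : e.mkQ x = 0 := Submodule.disjoint_def.mp hdisj _ hxP hxQ
    rwa [Submodule.mkQ_apply, Submodule.Quotient.mk_eq_zero] at this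
  have heB : e ≤ sSpan B := by
    have h3 : ¬ Disjoint (sSpan (insert e A)) (sSpan B) := by
      apply hconn
      · exact ⟨e, Finset.mem_insert_self _ _⟩
      · exact hBne
      · rw [Finset.disjoint_left]
        intro x hx hx'
        rcases Finset.mem_insert.mp hx with rfl | hx
        · exact Finset.notMem_erase x S ((hABun ▸ Finset.mem_union_right A hx') : x ∈ S.erase x)
        · exact Finset.disjoint_left.mp hABdisj hx hx'
      · rw [Finset.insert_union, hABun, Finset.insert_erase he]
    rw [Submodule.disjoint_def] at h3
    push_neg at h3
    obtain ⟨x, hx1, hx2, hx0⟩ := h3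
    have hxe : x ∈ e := by
      apply key
      · rw [sSpan_insert, sup_comm] at hx1; exact hx1
      · exact Submodule.mem_sup_left hx2
    have hN : (sSpan (insert e A) ⊓ sSpan B) ≠ ⊥ := by
      rw [Submodule.ne_bot_iff]; exact ⟨x, ⟨hx1, hx2⟩, hx0⟩
    have hNle : (sSpan (insert e A) ⊓ sSpan B) ≤ e := by
      intro y hy
      apply key
      · rw [sSpan_insert, sup_comm] at hy; exact (Submodule.mem_inf.mp hy).1
      · exact Submodule.mem_sup_left (Submodule.mem_inf.mp hy).2
    have := eq_of_le_line hNle heline hN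
    rw [← this]
    exact inf_le_right
  have heA : e ≤ sSpan A := by
    have h3 : ¬ Disjoint (sSpan A) (sSpan (insert e B)) := by
      apply hconn
      · exact hAne
      · exact ⟨e, Finset.mem_insert_self _ _⟩
      · rw [Finset.disjoint_left]
        intro x hx hx'
        rcases Finset.mem_insert.mp hx' with rfl | hx'
        · exact Finset.notMem_erase x S ((hABun ▸ Finset.mem_union_left B hx) : x ∈ S.erase x)
        · exact Finset.disjoint_left.mp hABdisj hx hx'
      · rw [Finset.union_insert, hABun, Finset.insert_erase he]
    rw [Submodule.disjoint_def] at h3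
    push_neg at h3
    obtain ⟨x, hx1, hx2, hx0⟩ := h3
    have hN : (sSpan A ⊓ sSpan (insert e B)) ≠ ⊥ := by
      rw [Submodule.ne_bot_iff]; exact ⟨x, ⟨hx1, hx2⟩, hx0⟩
    have hNle : (sSpan A ⊓ sSpan (insert e B)) ≤ e := by
      intro y hy
      apply key
      · exact Submodule.mem_sup_left (Submodule.mem_inf.mp hy).1
      · have := (Submodule.mem_inf.mp hy).2
        rw [sSpan_insert, sup_comm] at this; exact this
    have := eq_of_le_line hNle heline hN
    rw [← this]
    exact inf_le_left
  refine ⟨A, B, hAne, hBne, hABdisj, hABun, heA, heB, ?_⟩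
  apply le_antisymm
  · intro x hx
    exact key x (Submodule.mem_sup_left (Submodule.mem_inf.mp hx).1)
      (Submodule.mem_sup_left (Submodule.mem_inf.mp hx).2)
  · exact le_inf heA heB

end ArrAux

namespace ArrAux

variable {W : Type*} [AddCommGroup W] [Module ℂ W] [FiniteDimensional ℂ W]

lemma side_conn_core {S A B : Finset (Submodule ℂ W)} {e : Submodule ℂ W}
    (hconn : Conn S) (he : e ∈ S) (hABdisj : Disjoint A B) (hABun : A ∪ B = S.erase e)
    (heA : e ≤ sSpan A) (hint : sSpan A ⊓ sSpan B = e)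
    {P Q : Finset (Submodule ℂ W)} (hPne : P.Nonempty) (hQne : Q.Nonempty)
    (hPQ : Disjoint P Q) (hun : P ∪ Q = insert e A) (heP : e ∈ P)
    (hdisj : Disjoint (sSpan P) (sSpan Q)) : False := by
  have hQA : Q ⊆ A := by
    intro x hx
    have hx' : x ∈ insert e A := hun ▸ Finset.mem_union_right P hx
    rcases Finset.mem_insert.mp hx' with rfl | hxA
    · exact absurd heP (Finset.disjoint_right.mp hPQ hx)
    · exact hxA
  have happ := hconn Q (P ∪ B) hQne ⟨e, Finset.mem_union_left B heP⟩
    (by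
      rw [Finset.disjoint_union_right]
      exact ⟨hPQ.symm, Finset.disjoint_left.mpr
        (fun x hx hx' => Finset.disjoint_left.mp hABdisj (hQA hx) hx')⟩)
    (by
      rw [← Finset.union_assoc, Finset.union_comm Q P, hun, Finset.insert_union, hABun,
        Finset.insert_erase he])
  apply happ
  rw [Submodule.disjoint_def]
  intro x hxQ hxPB
  rw [sSpan_union, Submodule.mem_sup] at hxPB
  obtain ⟨p, hp, b, hb, hpb⟩ := hxPB
  have hpA : p ∈ sSpan A := by
    have : sSpan P ≤ sSpan (insert e A) := sSpan_mono (hun ▸ Finset.subset_union_left)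
    have := this hp
    rwa [sSpan_insert, sup_eq_right.mpr heA] at this
  have hxA : x ∈ sSpan A := sSpan_mono hQA hxQ
  have hbe : b ∈ e := by
    rw [← hint]
    exact ⟨by rw [← hpb] at hxA; simpa using sub_mem hxA hpA, hb⟩
  have hxP : x ∈ sSpan P := by
    rw [← hpb]
    exact add_mem hp (le_sSpan heP hbe)
  exact Submodule.disjoint_def.mp hdisj x hxP hxQ

lemma side_conn {S A B : Finset (Submodule ℂ W)} {e : Submodule ℂ W}
    (hconn : Conn S) (he : e ∈ S) (hABdisj : Disjoint A B) (hABun : A ∪ B = S.erase e)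
    (heA : e ≤ sSpan A) (hint : sSpan A ⊓ sSpan B = e) :
    Conn (insert e A) := by
  intro P Q hPne hQne hPQ hun hdisj
  have hePQ : e ∈ P ∪ Q := hun ▸ Finset.mem_insert_self e A
  rcases Finset.mem_union.mp hePQ with heP | heQ
  · exact side_conn_core hconn he hABdisj hABun heA hint hPne hQne hPQ hun heP hdisj
  · exact side_conn_core hconn he hABdisj hABun heA hint hQne hPne hPQ.symm
      (by rw [Finset.union_comm]; exact hun) heQ hdisj.symm

lemma glue {S A B : Finset (Submodule ℂ W)} {e₀ f : Submodule ℂ W}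
    (hl : ∀ m ∈ S, finrank ℂ m = 1) (hconn : Conn S) (he₀ : e₀ ∈ S)
    (hABdisj : Disjoint A B) (hABun : A ∪ B = S.erase e₀)
    (heA : e₀ ≤ sSpan A) (heB : e₀ ≤ sSpan B) (hint : sSpan A ⊓ sSpan B = e₀)
    (hf : f ∈ A) (hcontr : Conn (contr (insert e₀ A) f)) :
    Conn (contr S f) := by
  by_contra hnc
  have hfS : f ∈ S := Finset.mem_of_mem_erase (hABun ▸ Finset.mem_union_left B hf)
  have hfline := hl f hfS
  have he₀line := hl e₀ he₀
  obtain ⟨P, Q, hPne, hQne, hPQ, hun, hfP, hfQ, hintPQ⟩ := upgrade hconn hfS hfline hnc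
  set M := insert e₀ A with hM_def
  have hMS : M ⊆ S := by
    intro x hx
    rcases Finset.mem_insert.mp hx with rfl | hx
    · exact he₀
    · exact Finset.mem_of_mem_erase (hABun ▸ Finset.mem_union_left B hx)
  have he₀A : e₀ ∉ A := fun h => Finset.notMem_erase e₀ S (hABun ▸ Finset.mem_union_left B h)
  have hfe₀ : f ≠ e₀ := fun h => he₀A (h ▸ hf)
  have hfM : f ∈ M := Finset.mem_insert_of_mem hf
  set P₁ := P ∩ M with hP₁_def
  set Q₁ := Q ∩ M with hQ₁_def
  have hP₁Q₁un : P₁ ∪ Q₁ = M.erase f := by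
    rw [hP₁_def, hQ₁_def, ← Finset.union_inter_distrib_right, hun]
    ext x
    simp only [Finset.mem_inter, Finset.mem_erase]
    exact ⟨fun ⟨⟨hxf, _⟩, hxM⟩ => ⟨hxf, hxM⟩, fun ⟨hxf, hxM⟩ => ⟨⟨hxf, hMS hxM⟩, hxM⟩⟩
  -- if one side misses M entirely it is inside B, forcing f = e₀
  have side_B : ∀ R : Finset (Submodule ℂ W), R ⊆ S.erase f → R ∩ M = ∅ →
      f ≤ sSpan R → False := by
    intro R hRS hRM hfR
    have hRB : R ⊆ B := by
      intro x hx
      have hxS : x ∈ S := Finset.mem_of_mem_erase (hRS hx)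
      have hxM : x ∉ M := fun h => (Finset.eq_empty_iff_forall_notMem.mp hRM x)
        (Finset.mem_inter.mpr ⟨hx, h⟩)
      have hxe₀ : x ≠ e₀ := fun h => hxM (h ▸ Finset.mem_insert_self e₀ A)
      have : x ∈ A ∪ B := hABun ▸ Finset.mem_erase.mpr ⟨hxe₀, hxS⟩
      rcases Finset.mem_union.mp this with hxA | hxB
      · exact absurd (Finset.mem_insert_of_mem hxA) hxM
      · exact hxB
    have h1 : f ≤ sSpan B := le_trans hfR (sSpan_mono hRB)
    have h2 : f ≤ sSpan A := le_sSpan hf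
    have h3 : f ≤ e₀ := by rw [← hint]; exact le_inf h2 h1
    exact hfe₀ (eq_of_le_line h3 he₀line (line_ne_bot hfline))
  have hQ₁ne : Q₁.Nonempty := by
    rcases Finset.eq_empty_or_nonempty Q₁ with hemp | h
    · exact absurd hfQ (fun hh => side_B Q (hun ▸ Finset.subset_union_right) hemp hh)
    · exact h
  have hP₁ne : P₁.Nonempty := by
    rcases Finset.eq_empty_or_nonempty P₁ with hemp | h
    · exact absurd hfP (fun hh => side_B P (hun ▸ Finset.subset_union_left) hemp hh)
    · exact h
  -- spans of the two image parts are disjoint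
  have hspan_disj : Disjoint (sSpan (P₁.image (Submodule.map f.mkQ)))
      (sSpan (Q₁.image (Submodule.map f.mkQ))) := by
    rw [sSpan_map, sSpan_map, Submodule.disjoint_def]
    intro z hz1 hz2
    obtain ⟨x, hx, rfl⟩ := hz1
    obtain ⟨y, hy, hyx⟩ := hz2
    have hxP : x ∈ sSpan P := sSpan_mono Finset.inter_subset_left hx
    have hyQ : y ∈ sSpan Q := sSpan_mono Finset.inter_subset_left hy
    have hxy : x - y ∈ f := by
      have : f.mkQ (x - y) = 0 := by rw [map_sub, hyx, sub_self]
      rwa [Submodule.mkQ_apply, Submodule.Quotient.mk_eq_zero] at this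
    have hxQ : x ∈ sSpan Q := by
      have : x = (x - y) + y := (sub_add_cancel x y).symm
      rw [this]
      exact add_mem (hfQ hxy) hyQ
    have hxf : x ∈ f := by rw [← hintPQ]; exact ⟨hxP, hxQ⟩
    rw [Submodule.mkQ_apply, Submodule.Quotient.mk_eq_zero]
    exact hxf
  -- the two image parts are disjoint finsets
  have himg_disj : Disjoint (P₁.image (Submodule.map f.mkQ)) (Q₁.image (Submodule.map f.mkQ)) := by
    rw [Finset.disjoint_left]
    intro m hm1 hm2
    obtain ⟨ℓ, hℓ, rfl⟩ := Finset.mem_image.mp hm1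
    have hℓS : ℓ ∈ S.erase f := hun ▸ Finset.mem_union_left Q (Finset.inter_subset_left hℓ)
    have hℓline := hl ℓ (Finset.mem_of_mem_erase hℓS)
    have hℓf : ℓ ≠ f := (Finset.mem_erase.mp hℓS).1
    have hmb : Submodule.map f.mkQ ℓ ≠ ⊥ := map_mkQ_ne_bot hℓline hfline hℓf
    apply hmb
    rw [← le_bot_iff]
    exact le_trans (le_inf (le_sSpan hm1) (le_sSpan hm2)) hspan_disj.le_bot
  exact hcontr (P₁.image (Submodule.map f.mkQ)) (Q₁.image (Submodule.map f.mkQ))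
    (hP₁ne.image _) (hQ₁ne.image _) himg_disj
    (by rw [← Finset.image_union, hP₁Q₁un, contr]) hspan_disj

end ArrAux

namespace ArrAux

variable {W : Type*} [AddCommGroup W] [Module ℂ W] [FiniteDimensional ℂ W]

lemma finrank_map_mkQ_le {e N : Submodule ℂ W} (he : e ≤ N) (hebot : e ≠ ⊥) :
    finrank ℂ (Submodule.map e.mkQ N) + 1 ≤ finrank ℂ N := by
  have hrn := LinearMap.finrank_range_add_finrank_ker (e.mkQ.comp N.subtype)
  have hr : LinearMap.range (e.mkQ.comp N.subtype) = Submodule.map e.mkQ N := by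
    rw [LinearMap.range_comp, Submodule.range_subtype]
  have hker : LinearMap.ker (e.mkQ.comp N.subtype) ≠ ⊥ := by
    obtain ⟨x, hx, hx0⟩ := (Submodule.ne_bot_iff e).mp hebot
    rw [Submodule.ne_bot_iff]
    refine ⟨⟨x, he hx⟩, ?_, ?_⟩
    · rw [LinearMap.mem_ker, LinearMap.comp_apply, Submodule.subtype_apply,
        Submodule.mkQ_apply, Submodule.Quotient.mk_eq_zero]
      exact hx
    · intro h
      apply hx0
      simpa using congrArg Subtype.val h
  have h1 : finrank ℂ (LinearMap.ker (e.mkQ.comp N.subtype)) ≠ 0 :=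
    fun h0 => hker (Submodule.finrank_eq_zero.mp h0)
  rw [hr] at hrn
  omega

lemma conn_contr_of_rank_two {S : Finset (Submodule ℂ W)}
    (hl : ∀ m ∈ S, finrank ℂ m = 1) (hr : finrank ℂ (sSpan S) = 2)
    {e : Submodule ℂ W} (he : e ∈ S) : Conn (contr S e) := by
  apply conn_of_card_le_one
  have hMq : finrank ℂ (Submodule.map e.mkQ (sSpan S)) ≤ 1 := by
    have := finrank_map_mkQ_le (le_sSpan he) (line_ne_bot (hl e he))
    omega
  have hall : ∀ m ∈ contr S e, m = Submodule.map e.mkQ (sSpan S) := by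
    intro m hm
    obtain ⟨ℓ, hℓ, rfl⟩ := Finset.mem_image.mp hm
    have hℓS := Finset.mem_of_mem_erase hℓ
    have h1 : Submodule.map e.mkQ ℓ ≤ Submodule.map e.mkQ (sSpan S) :=
      Submodule.map_mono (le_sSpan hℓS)
    have hnb : Submodule.map e.mkQ ℓ ≠ ⊥ :=
      map_mkQ_ne_bot (hl ℓ hℓS) (hl e he) (Finset.mem_erase.mp hℓ).1
    have h2 : finrank ℂ (Submodule.map e.mkQ ℓ) ≠ 0 :=
      fun h0 => hnb (Submodule.finrank_eq_zero.mp h0)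
    exact Submodule.eq_of_le_of_finrank_le h1 (by omega)
  rw [Finset.card_le_one]
  intro a ha b hb
  rw [hall a ha, hall b hb]

theorem main_aux : ∀ r : ℕ, ∀ S : Finset (Submodule ℂ W), (∀ m ∈ S, finrank ℂ m = 1) →
    Conn S → finrank ℂ (sSpan S) = r → 2 ≤ r →
    ∀ g : Submodule ℂ W, ∃ e ∈ S, e ≠ g ∧ Conn (contr S e) := by
  intro r
  induction r using Nat.strong_induction_on with
  | _ r IH =>
  intro S hl hconn hr hr2 g
  have hcard : 1 < S.card := one_lt_card hl (by omega)
  obtain ⟨e₀, he₀, he₀g⟩ := Finset.exists_mem_ne hcard g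
  rcases eq_or_lt_of_le hr2 with h2 | h3
  · exact ⟨e₀, he₀, he₀g, conn_contr_of_rank_two hl (by omega) he₀⟩
  · by_contra hcon
    push_neg at hcon
    have hnc := hcon e₀ he₀ he₀g
    obtain ⟨A, B, hAne, hBne, hABdisj, hABun, heA, heB, hint⟩ :=
      upgrade hconn he₀ (hl e₀ he₀) hnc
    have step : ∀ A B : Finset (Submodule ℂ W), A.Nonempty → B.Nonempty → Disjoint A B →
        A ∪ B = S.erase e₀ → e₀ ≤ sSpan A → e₀ ≤ sSpan B → sSpan A ⊓ sSpan B = e₀ →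
        g ∉ A → False := by
      clear hAne hBne hABdisj hABun heA heB hint A B
      intro A B hAne hBne hABdisj hABun heA heB hint hgA
      have hAS : A ⊆ S := fun x hx =>
        Finset.mem_of_mem_erase (hABun ▸ Finset.mem_union_left B hx)
      have hBS : B ⊆ S := fun x hx =>
        Finset.mem_of_mem_erase (hABun ▸ Finset.mem_union_right A hx)
      have hlM : ∀ m ∈ insert e₀ A, finrank ℂ m = 1 := by
        intro m hm
        rcases Finset.mem_insert.mp hm with rfl | hm
        · exact hl m he₀
        · exact hl m (hAS hm)
      have hconnM := side_conn hconn he₀ hABdisj hABun heA hint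
      have hspanM : sSpan (insert e₀ A) = sSpan A := by
        rw [sSpan_insert, sup_eq_right.mpr heA]
      -- rank bounds
      obtain ⟨ℓA, hℓA⟩ := hAne
      have hℓAe₀ : ℓA ≠ e₀ :=
        (Finset.mem_erase.mp (hABun ▸ Finset.mem_union_left B hℓA)).1
      have ha2 : 2 ≤ finrank ℂ (sSpan A) :=
        two_le_finrank heA (le_sSpan hℓA) (hl ℓA (hAS hℓA)) (hl e₀ he₀) hℓAe₀
      obtain ⟨ℓB, hℓB⟩ := hBne
      have hℓBe₀ : ℓB ≠ e₀ :=
        (Finset.mem_erase.mp (hABun ▸ Finset.mem_union_right A hℓB)).1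
      have hb2 : 2 ≤ finrank ℂ (sSpan B) :=
        two_le_finrank heB (le_sSpan hℓB) (hl ℓB (hBS hℓB)) (hl e₀ he₀) hℓBe₀
      have hsum := Submodule.finrank_sup_add_finrank_inf_eq (sSpan A) (sSpan B)
      have hsup : sSpan A ⊔ sSpan B = sSpan S := by
        rw [← sSpan_union, hABun]
        have h1 : sSpan S = e₀ ⊔ sSpan (S.erase e₀) := by
          rw [← sSpan_insert, Finset.insert_erase he₀]
        have h2 : e₀ ≤ sSpan (S.erase e₀) :=
          le_trans heA (sSpan_mono (hABun ▸ Finset.subset_union_left))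
        rw [h1, sup_eq_right.mpr h2]
      rw [hsup, hint, hr, hl e₀ he₀] at hsum
      -- apply induction to insert e₀ A
      obtain ⟨f, hfM, hfe₀, hconnMf⟩ := IH (finrank ℂ (sSpan A)) (by omega)
        (insert e₀ A) hlM hconnM (by rw [hspanM]) (by omega) e₀
      have hfA : f ∈ A := (Finset.mem_insert.mp hfM).resolve_left hfe₀
      have hglue := glue hl hconn he₀ hABdisj hABun heA heB hint hfA hconnMf
      exact hcon f (hAS hfA) (fun h => hgA (h ▸ hfA)) hglue
    by_cases hgA : g ∈ A
    · exact step B A hBne hAne hABdisj.symm (by rw [Finset.union_comm]; exact hABun)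
        heB heA (by rw [inf_comm]; exact hint)
        (fun h => Finset.disjoint_left.mp hABdisj hgA h)
    · exact step A B hAne hBne hABdisj hABun heA heB hint hgA

end ArrAux

namespace ArrAux

variable {W : Type*} [AddCommGroup W] [Module ℂ W]

lemma conn_image_of_conn {W₂ : Type*} [AddCommGroup W₂] [Module ℂ W₂]
    {ι : W →ₗ[ℂ] W₂} (hι : Function.Injective ι)
    {S : Finset (Submodule ℂ W)} (h : Conn S) : Conn (S.image (Submodule.map ι)) := by
  intro P Q hPne hQne hPQ hun hdisj
  set P₀ := S.filter (fun m => Submodule.map ι m ∈ P) with hP₀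
  set Q₀ := S.filter (fun m => Submodule.map ι m ∉ P) with hQ₀
  have hP₀ne : P₀.Nonempty := by
    obtain ⟨m, hm⟩ := hPne
    have : m ∈ S.image (Submodule.map ι) := hun ▸ Finset.mem_union_left Q hm
    obtain ⟨ℓ, hℓ, rfl⟩ := Finset.mem_image.mp this
    exact ⟨ℓ, Finset.mem_filter.mpr ⟨hℓ, hm⟩⟩
  have hQ₀ne : Q₀.Nonempty := by
    obtain ⟨m, hm⟩ := hQne
    have : m ∈ S.image (Submodule.map ι) := hun ▸ Finset.mem_union_right P hm
    obtain ⟨ℓ, hℓ, rfl⟩ := Finset.mem_image.mp this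
    exact ⟨ℓ, Finset.mem_filter.mpr ⟨hℓ, Finset.disjoint_right.mp hPQ hm⟩⟩
  have hP₀span : Submodule.map ι (sSpan P₀) ≤ sSpan P := by
    rw [← sSpan_map]
    apply sSpan_mono
    intro x hx
    obtain ⟨ℓ, hℓ, rfl⟩ := Finset.mem_image.mp hx
    exact (Finset.mem_filter.mp hℓ).2
  have hQ₀span : Submodule.map ι (sSpan Q₀) ≤ sSpan Q := by
    rw [← sSpan_map]
    apply sSpan_mono
    intro x hx
    obtain ⟨ℓ, hℓ, rfl⟩ := Finset.mem_image.mp hx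
    have h1 := Finset.mem_filter.mp hℓ
    have : Submodule.map ι ℓ ∈ P ∪ Q := hun ▸ Finset.mem_image_of_mem _ h1.1
    exact (Finset.mem_union.mp this).resolve_left h1.2
  refine h P₀ Q₀ hP₀ne hQ₀ne ?_ (Finset.filter_union_filter_not_eq _ _) ?_
  · rw [Finset.disjoint_left]
    intro x hx hx'
    exact (Finset.mem_filter.mp hx').2 (Finset.mem_filter.mp hx).2
  · rw [Submodule.disjoint_def]
    intro x hx1 hx2
    have : ι x = 0 := Submodule.disjoint_def.mp hdisj (ι x)
      (hP₀span (Submodule.mem_map_of_mem hx1)) (hQ₀span (Submodule.mem_map_of_mem hx2))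
    rw [← map_zero ι] at this
    exact hι this

end ArrAux

section Transfer

variable {V : Type*} [AddCommGroup V] [Module ℂ V]

lemma dualAnnihilator_ker {f : Module.Dual ℂ V} (hf : f ≠ 0) :
    (LinearMap.ker f).dualAnnihilator = ℂ ∙ f := by
  apply le_antisymm
  · intro g hg
    rw [Submodule.mem_dualAnnihilator] at hg
    obtain ⟨x₀, hx₀⟩ : ∃ x, f x ≠ 0 := by
      by_contra h
      push_neg at h
      exact hf (LinearMap.ext fun x => h x)
    rw [Submodule.mem_span_singleton]
    refine ⟨g x₀ * (f x₀)⁻¹, ?_⟩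
    ext v
    have hv : v - (f v * (f x₀)⁻¹) • x₀ ∈ LinearMap.ker f := by
      rw [LinearMap.mem_ker, map_sub, map_smul, smul_eq_mul, mul_assoc,
        inv_mul_cancel₀ hx₀, mul_one, sub_self]
    have hgv := hg _ hv
    rw [map_sub, map_smul, smul_eq_mul, sub_eq_zero] at hgv
    rw [LinearMap.smul_apply, smul_eq_mul, hgv]
    ring
  · rw [Submodule.span_singleton_le_iff_mem, Submodule.mem_dualAnnihilator]
    intro x hx
    rwa [LinearMap.mem_ker] at hx

lemma finrank_ker_add_one [FiniteDimensional ℂ V] {f : Module.Dual ℂ V} (hf : f ≠ 0) :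
    Module.finrank ℂ (LinearMap.ker f) + 1 = Module.finrank ℂ V := by
  have hrn := LinearMap.finrank_range_add_finrank_ker f
  have h1 : LinearMap.range f ≠ ⊥ := by rwa [Ne, LinearMap.range_eq_bot]
  have h2 : Module.finrank ℂ (LinearMap.range f) ≤ 1 := by
    have := (LinearMap.range f).finrank_le
    simpa using this
  have h3 : Module.finrank ℂ (LinearMap.range f) ≠ 0 :=
    fun h0 => h1 (Submodule.finrank_eq_zero.mp h0)
  omega

lemma dualAnnihilator_finrank_one [FiniteDimensional ℂ V] {H : Submodule ℂ V}
    (hH : IsHyperplane H) : Module.finrank ℂ H.dualAnnihilator = 1 := by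
  obtain ⟨f, hf, rfl⟩ := hH
  rw [dualAnnihilator_ker hf]
  exact finrank_span_singleton hf

lemma arrSpan_eq_sSpan (𝓗 : Finset (Submodule ℂ V)) :
    arrSpan 𝓗 = ArrAux.sSpan (𝓗.image Submodule.dualAnnihilator) := by
  rw [ArrAux.sSpan, Finset.sup_image, arrSpan]
  exact (Finset.sup_eq_iSup 𝓗 Submodule.dualAnnihilator).symm

end Transfer



section Transfer2

variable {V : Type*} [AddCommGroup V] [Module ℂ V] [FiniteDimensional ℂ V]

lemma arrSpan_eq_top (𝓗 : Finset (Submodule ℂ V)) (hess : ArrEssential 𝓗) :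
    arrSpan 𝓗 = ⊤ := by
  have hco : (arrSpan 𝓗).dualCoannihilator ≤ arrCentre 𝓗 := by
    intro v hv
    rw [Submodule.mem_dualCoannihilator] at hv
    rw [arrCentre, Submodule.mem_iInf]
    intro H
    rw [Submodule.mem_iInf]
    intro hH
    rw [← Subspace.forall_mem_dualAnnihilator_apply_eq_zero_iff H v]
    intro φ hφ
    have hle : H.dualAnnihilator ≤ arrSpan 𝓗 :=
      le_iSup₂ (f := fun (H : Submodule ℂ V) (_ : H ∈ 𝓗) => H.dualAnnihilator) H hH
    exact hv φ (hle hφ)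
  rw [ArrEssential] at hess
  have hbot : (arrSpan 𝓗).dualCoannihilator = ⊥ := le_bot_iff.mp (hess ▸ hco)
  have hfr := Subspace.finrank_add_finrank_dualCoannihilator_eq (arrSpan 𝓗)
  rw [hbot, finrank_bot] at hfr
  apply Submodule.eq_top_of_finrank_eq
  rw [Subspace.dual_finrank_eq]
  omega

lemma conn_of_irreducible {𝓗 : Finset (Submodule ℂ V)} (hirr : ArrIrreducible 𝓗) :
    ArrAux.Conn (𝓗.image Submodule.dualAnnihilator) := by
  intro P Q hPne hQne hPQ hun hdisj
  apply hirr
  refine ⟨𝓗.filter (fun H => H.dualAnnihilator ∈ P),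
    𝓗.filter (fun H => H.dualAnnihilator ∉ P), ?_, ?_, ?_,
    Finset.filter_union_filter_not_eq _ _, ?_⟩
  · obtain ⟨m, hm⟩ := hPne
    have : m ∈ 𝓗.image Submodule.dualAnnihilator := hun ▸ Finset.mem_union_left Q hm
    obtain ⟨H, hH, rfl⟩ := Finset.mem_image.mp this
    exact ⟨H, Finset.mem_filter.mpr ⟨hH, hm⟩⟩
  · obtain ⟨m, hm⟩ := hQne
    have : m ∈ 𝓗.image Submodule.dualAnnihilator := hun ▸ Finset.mem_union_right P hm
    obtain ⟨H, hH, rfl⟩ := Finset.mem_image.mp this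
    exact ⟨H, Finset.mem_filter.mpr ⟨hH, Finset.disjoint_right.mp hPQ hm⟩⟩
  · rw [Finset.disjoint_left]
    intro x hx hx'
    exact (Finset.mem_filter.mp hx').2 (Finset.mem_filter.mp hx).2
  · have h1 : arrSpan (𝓗.filter (fun H => H.dualAnnihilator ∈ P)) ≤ ArrAux.sSpan P := by
      rw [arrSpan_eq_sSpan]
      apply ArrAux.sSpan_le
      intro m hm
      obtain ⟨H, hH, rfl⟩ := Finset.mem_image.mp hm
      exact ArrAux.le_sSpan (Finset.mem_filter.mp hH).2
    have h2 : arrSpan (𝓗.filter (fun H => H.dualAnnihilator ∉ P)) ≤ ArrAux.sSpan Q := by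
      rw [arrSpan_eq_sSpan]
      apply ArrAux.sSpan_le
      intro m hm
      obtain ⟨H, hH, rfl⟩ := Finset.mem_image.mp hm
      have h3 := Finset.mem_filter.mp hH
      have : H.dualAnnihilator ∈ P ∪ Q := hun ▸ Finset.mem_image_of_mem _ h3.1
      exact ArrAux.le_sSpan ((Finset.mem_union.mp this).resolve_left h3.2)
    exact hdisj.mono h1 h2

lemma induced_essential (𝓗 : Finset (Submodule ℂ V)) (hess : ArrEssential 𝓗)
    (H₀ : Submodule ℂ V) : ArrEssential (inducedArr 𝓗 H₀) := by
  rw [ArrEssential, arrCentre, eq_bot_iff]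
  intro x hx
  simp only [Submodule.mem_iInf] at hx
  have hxV : (x : V) ∈ arrCentre 𝓗 := by
    rw [arrCentre, Submodule.mem_iInf]
    intro H
    rw [Submodule.mem_iInf]
    intro hH
    by_cases hHH : H = H₀
    · subst hHH
      exact x.2
    · have hK : Submodule.comap H₀.subtype H ∈ inducedArr 𝓗 H₀ :=
        Finset.mem_image_of_mem _ (Finset.mem_erase.mpr ⟨hHH, hH⟩)
      exact hx _ hK
  rw [ArrEssential] at hess
  rw [hess, Submodule.mem_bot] at hxV
  rw [Submodule.mem_bot]
  exact Subtype.ext hxV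

lemma induced_dualAnnihilator {𝓗 : Finset (Submodule ℂ V)} (harr : IsArrangement 𝓗)
    {H H₀ : Submodule ℂ V} (hH₀ : H₀ ∈ 𝓗) (hH : H ∈ 𝓗) (hne : H ≠ H₀) :
    (Submodule.comap H₀.subtype H).dualAnnihilator
      = Submodule.map H₀.dualRestrict H.dualAnnihilator := by
  obtain ⟨f₀, hf₀, hH₀eq⟩ := harr H₀ hH₀
  obtain ⟨f, hf, rfl⟩ := harr H hH
  have hres : H₀.dualRestrict f ≠ 0 := by
    intro h0
    have hle : H₀ ≤ LinearMap.ker f := by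
      intro x hx
      have hz : H₀.dualRestrict f ⟨x, hx⟩ = 0 := by rw [h0]; rfl
      rwa [Submodule.dualRestrict_apply] at hz
    have h1 := finrank_ker_add_one (V := V) hf
    have h2 : Module.finrank ℂ H₀ + 1 = Module.finrank ℂ V := by
      rw [hH₀eq]
      exact finrank_ker_add_one hf₀
    exact hne (Submodule.eq_of_le_of_finrank_eq hle (by omega)).symm
  have hker : Submodule.comap H₀.subtype (LinearMap.ker f)
      = LinearMap.ker (H₀.dualRestrict f) := by
    ext x
    simp [Submodule.mem_comap, LinearMap.mem_ker, Submodule.dualRestrict_apply]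
  rw [hker, dualAnnihilator_ker hres, dualAnnihilator_ker hf, Submodule.map_span,
    Set.image_singleton]

end Transfer2

/-- An essential irreducible arrangement in `V` with `dim V ≥ 2`
has a hyperplane `H₀` whose induced arrangement on `H₀` is essential and
irreducible. -/
theorem exists_hyperplane_induced_essential_irreducible
    [FiniteDimensional ℂ V]
    (𝓗 : Finset (Submodule ℂ V)) (harr : IsArrangement 𝓗)
    (hess : ArrEssential 𝓗) (hirr : ArrIrreducible 𝓗)
    (hdim : 2 ≤ Module.finrank ℂ V) :
    ∃ H₀ ∈ 𝓗, ArrEssential (inducedArr 𝓗 H₀) ∧ ArrIrreducible (inducedArr 𝓗 H₀) := by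
  classical
  set S := 𝓗.image Submodule.dualAnnihilator with hS
  have dainj : Function.Injective
      (Submodule.dualAnnihilator : Submodule ℂ V → Submodule ℂ (Module.Dual ℂ V)) :=
    fun a b h => Subspace.dualAnnihilator_inj.mp h
  have hlines : ∀ m ∈ S, Module.finrank ℂ m = 1 := by
    intro m hm
    obtain ⟨H, hH, rfl⟩ := Finset.mem_image.mp hm
    exact dualAnnihilator_finrank_one (harr H hH)
  have hconn : ArrAux.Conn S := conn_of_irreducible hirr
  have hrank : Module.finrank ℂ (ArrAux.sSpan S) = Module.finrank ℂ V := by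
    rw [← arrSpan_eq_sSpan, arrSpan_eq_top 𝓗 hess, finrank_top, Subspace.dual_finrank_eq]
  obtain ⟨e, heS, -, hconn_contr⟩ :=
    ArrAux.main_aux (Module.finrank ℂ V) S hlines hconn hrank hdim ⊥
  obtain ⟨H₀, hH₀, rfl⟩ := Finset.mem_image.mp heS
  refine ⟨H₀, hH₀, induced_essential 𝓗 hess H₀, ?_⟩
  intro hred
  obtain ⟨𝓖₁, 𝓖₂, h1ne, h2ne, hdisj, hun, hspan⟩ := hred
  have dainj2 : Function.Injective
      (Submodule.dualAnnihilator : Submodule ℂ ↥H₀ → Submodule ℂ (Module.Dual ℂ ↥H₀)) :=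
    fun a b h => Subspace.dualAnnihilator_inj.mp h
  set ρ := H₀.dualRestrict with hρ
  set L₀ := H₀.dualAnnihilator with hL₀
  have hkerρ : LinearMap.ker ρ = L₀ := Submodule.dualRestrict_ker_eq_dualAnnihilator H₀
  set ρbar := L₀.liftQ ρ (le_of_eq hkerρ.symm) with hρbar
  have hρbar_inj : Function.Injective ρbar := by
    rw [← LinearMap.ker_eq_bot]
    exact Submodule.ker_liftQ_eq_bot _ _ _ (le_of_eq hkerρ)
  have hfac : ∀ m : Submodule ℂ (Module.Dual ℂ V),
      Submodule.map ρbar (Submodule.map L₀.mkQ m) = Submodule.map ρ m := by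
    intro m
    rw [← Submodule.map_comp, Submodule.liftQ_mkQ]
  have hbase : S.erase L₀ = (𝓗.erase H₀).image Submodule.dualAnnihilator :=
    (Finset.image_erase dainj 𝓗 H₀).symm
  have hS'' : (inducedArr 𝓗 H₀).image Submodule.dualAnnihilator
      = (ArrAux.contr S L₀).image (Submodule.map ρbar) := by
    rw [inducedArr, Finset.image_image, ArrAux.contr, hbase, Finset.image_image,
      Finset.image_image]
    apply Finset.image_congr
    intro H hH
    simp only [Function.comp_apply]
    rw [hfac, ← induced_dualAnnihilator harr hH₀ (Finset.mem_of_mem_erase hH)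
      (Finset.mem_erase.mp hH).1]
  have hconn'' : ArrAux.Conn ((inducedArr 𝓗 H₀).image Submodule.dualAnnihilator) := by
    rw [hS'']
    exact ArrAux.conn_image_of_conn hρbar_inj hconn_contr
  apply hconn'' (𝓖₁.image Submodule.dualAnnihilator) (𝓖₂.image Submodule.dualAnnihilator)
    (h1ne.image _) (h2ne.image _) ((Finset.disjoint_image dainj2).mpr hdisj)
    (by rw [← Finset.image_union, hun])
  rw [← arrSpan_eq_sSpan, ← arrSpan_eq_sSpan]
  exact hspan
end
end

section
/- For every n ≥ 1 and every a = (a₁,…,a_{n+1}) ∈ ℂ^{n+1}, the Jordan–Pochhammer endomorphisms Ã_{i,j} of ℂ^{n+1} satisfy: (a) Ã_{i,j} vanishes on the hyperplane {v ∈ ℂ^{n+1} : v_i = v_j}; (b) for every triple i < j < k, the sum Ã_{i,j} + Ã_{i,k} + Ã_{j,k} commutes with each of Ã_{i,j}, Ã_{i,k}, Ã_{j,k} (equivalently, [Ã_{i,j}, Ã_{i,k} + Ã_{j,k}] = 0 and cyclically); (c) [Ã_{i,j}, Ã_{k,l}] = 0 whenever {i,j} ∩ {k,l} = ∅. In other words,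 the residues of the Lauricella connection satisfy the infinitesimal braid relations, i.e. the Basic Assumptions for the braid arrangement. -/
open scoped Classical

noncomputable section

/-- The Jordan–Pochhammer endomorphism `Ã_{i,j}` of `ℂⁿ` with parameters `a`:
`Ã_{i,j}(v) = (v_i − v_j) · (a_j ẽ_i − a_i ẽ_j)`. -/
def JPend {n : ℕ} (a : Fin n → ℂ) (i j : Fin n) : Module.End ℂ (Fin n → ℂ) :=
  LinearMap.smulRight
    ((LinearMap.proj i : (Fin n → ℂ) →ₗ[ℂ] ℂ) - LinearMap.proj j)
    (a j • (Pi.single i 1 : Fin n → ℂ) - a i • (Pi.single j 1 : Fin n → ℂ))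

/-- Pointwise formula for the Jordan–Pochhammer endomorphism. -/
lemma JP_apply {n : ℕ} (a : Fin n → ℂ) (i j : Fin n) (v : Fin n → ℂ) (t : Fin n) :
    JPend a i j v t =
      (v i - v j) * (a j * (if t = i then 1 else 0) - a i * (if t = j then 1 else 0)) := by
  simp [JPend, Pi.single_apply, mul_comm]

/-- The Jordan–Pochhammer endomorphisms satisfy: (a) `Ã_{i,j}`
vanishes on the hyperplane `{v_i = v_j}`; (b) for `i < j < k` the sum
`Ã_{i,j} + Ã_{i,k} + Ã_{j,k}` commutes with each of its three summands; (c)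
`[Ã_{i,j}, Ã_{k,l}] = 0` when `{i,j} ∩ {k,l} = ∅`. These are the infinitesimal braid
relations, i.e. the Basic Assumptions for the braid arrangement. -/
theorem jordanPochhammer_infinitesimal_braid_relations
    (n : ℕ) (hn : 1 ≤ n) (a : Fin (n + 1) → ℂ) :
    (∀ i j : Fin (n + 1), i < j →
        ∀ v : Fin (n + 1) → ℂ, v i = v j → JPend a i j v = 0) ∧
      (∀ i j k : Fin (n + 1), i < j → j < k →
        Commute (JPend a i j + JPend a i k + JPend a j k) (JPend a i j) ∧
        Commute (JPend a i j + JPend a i k + JPend a j k) (JPend a i k) ∧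
        Commute (JPend a i j + JPend a i k + JPend a j k) (JPend a j k)) ∧
      ∀ i j k l : Fin (n + 1), i < j → k < l →
        i ≠ k → i ≠ l → j ≠ k → j ≠ l → Commute (JPend a i j) (JPend a k l) := by
  refine ⟨?_, ?_, ?_⟩
  · intro i j _ v hv
    funext t
    simp [JP_apply, hv]
  · intro i j k hij hjk
    have h1 : i ≠ j := hij.ne
    have h2 : j ≠ k := hjk.ne
    have h3 : i ≠ k := (hij.trans hjk).ne
    refine ⟨?_, ?_, ?_⟩ <;>
    · unfold Commute SemiconjBy
      apply LinearMap.ext; intro v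
      funext t
      simp only [Module.End.mul_apply, LinearMap.add_apply, Pi.add_apply, JP_apply,
        h1, h2, h3, h1.symm, h2.symm, h3.symm, if_neg, if_pos, if_false, if_true]
      split_ifs <;> ring
  · intro i j k l _ _ hik hil hjk hjl
    unfold Commute SemiconjBy
    apply LinearMap.ext; intro v
    funext t
    simp only [Module.End.mul_apply, JP_apply, hik, hil, hjk, hjl, hik.symm, hil.symm,
      hjk.symm, hjl.symm, if_neg, if_pos, if_false, if_true]
    split_ifs <;> ring
end
end

section
/- Let α₁,…,α_{n+1} be real numbers satisfying conditions (N.I.), (P) and (S). Then for every subset I ⊆ {1,…,n+1} with |I| ≥ 2, one has Σ_{i∈I} α_i > |I| − 1. -/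
open scoped Classical

noncomputable section

/-- If pairwise sums of an integer family are at least `c ≤ 1`, then the sum over
any set of cardinality at least 2 is at least `(card - 1) * c`. -/
lemma int_pair_sum_lemma {ι : Type*} [DecidableEq ι] (c : ℤ) (hc : c ≤ 1)
    (I : Finset ι) (g : ι → ℤ)
    (hg : ∀ i ∈ I, ∀ j ∈ I, i ≠ j → c ≤ g i + g j)
    (hI : 2 ≤ I.card) :
    ((I.card : ℤ) - 1) * c ≤ ∑ i ∈ I, g i := by
  have hne : I.Nonempty := Finset.card_pos.mp (by omega)
  obtain ⟨i0, hi0, hmin⟩ := I.exists_min_image g hne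
  by_cases h0 : g i0 ≤ 0
  · have hsub : ∑ i ∈ I, g i = g i0 + ∑ i ∈ I.erase i0, g i :=
      (Finset.add_sum_erase _ _ hi0).symm
    have hcard : (I.erase i0).card = I.card - 1 := Finset.card_erase_of_mem hi0
    have hbound : ∀ j ∈ I.erase i0, c - g i0 ≤ g j := by
      intro j hj
      have hjI := Finset.mem_of_mem_erase hj
      have hne' := Finset.ne_of_mem_erase hj
      have := hg i0 hi0 j hjI (Ne.symm hne')
      linarith
    have hsum := Finset.card_nsmul_le_sum _ _ _ hbound
    rw [nsmul_eq_mul, hcard] at hsum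
    have hcast : ((I.card - 1 : ℕ) : ℤ) = (I.card : ℤ) - 1 := by
      have : 1 ≤ I.card := by omega
      push_cast [this]; ring
    rw [hcast] at hsum
    have hcard2 : (2 : ℤ) ≤ (I.card : ℤ) := by exact_mod_cast hI
    nlinarith [hsum, hsub, mul_nonneg (by linarith : (0:ℤ) ≤ (I.card : ℤ) - 2)
      (by linarith : (0:ℤ) ≤ -g i0)]
  · have h1 : ∀ i ∈ I, (1 : ℤ) ≤ g i := fun i hi => by
      have := hmin i hi; omega
    have hsum := Finset.card_nsmul_le_sum _ _ _ h1
    rw [nsmul_eq_mul, mul_one] at hsum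
    have hcard2 : (2 : ℤ) ≤ (I.card : ℤ) := by exact_mod_cast hI
    nlinarith [hsum]

/-- If `α₁, …, α_{n+1}` satisfy the non-integrality condition
(N.I.), the positivity condition (P), and the signature condition (S), then
`Σ_{i ∈ I} α_i > |I| − 1` for every subset `I` with `|I| ≥ 2`. -/
theorem sum_gt_card_sub_one_of_NI_P_S
    (n : ℕ) (α : Fin (n + 1) → ℝ)
    (hNI : ∀ i : Fin (n + 1), ∀ m : ℤ, α i ≠ m)
    (hP : ∀ i j : Fin (n + 1), i < j → 1 < α i + α j)
    (hS : (∑ i, Int.fract (α i)) < 1 ∨ (n : ℝ) < ∑ i, Int.fract (α i)) :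
    ∀ I : Finset (Fin (n + 1)), 2 ≤ I.card →
      (I.card : ℝ) - 1 < ∑ i ∈ I, α i := by
  intro I hI
  have hfpos : ∀ i, 0 < Int.fract (α i) := fun i =>
    Int.fract_pos.mpr (fun h => hNI i ⌊α i⌋ h)
  have hflt : ∀ i, Int.fract (α i) < 1 := fun i => Int.fract_lt_one _
  have hfloor : ∀ i, α i = (⌊α i⌋ : ℝ) + Int.fract (α i) := fun i =>
    (Int.floor_add_fract _).symm
  have hP2 : ∀ i j : Fin (n + 1), i ≠ j → 1 < α i + α j := by
    intro i j hij
    rcases lt_or_gt_of_ne hij with h | h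
    · exact hP i j h
    · have := hP j i h; linarith
  have hne : I.Nonempty := Finset.card_pos.mp (by omega)
  have hsplit : ∑ i ∈ I, α i
      = ((∑ i ∈ I, ⌊α i⌋ : ℤ) : ℝ) + ∑ i ∈ I, Int.fract (α i) := by
    push_cast
    rw [← Finset.sum_add_distrib]
    exact Finset.sum_congr rfl fun i _ => hfloor i
  rcases hS with hS | hS
  · -- case: sum of fractional parts < 1
    have hg : ∀ i ∈ I, ∀ j ∈ I, i ≠ j → (1 : ℤ) ≤ ⌊α i⌋ + ⌊α j⌋ := by
      intro i _ j _ hij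
      have hpairle : Int.fract (α i) + Int.fract (α j)
          ≤ ∑ k, Int.fract (α k) := by
        have hsub : ({i, j} : Finset (Fin (n + 1))) ⊆ Finset.univ :=
          Finset.subset_univ _
        have := Finset.sum_le_sum_of_subset_of_nonneg hsub
          (fun k _ _ => le_of_lt (hfpos k))
        rwa [Finset.sum_pair hij] at this
      have h1 : 1 < α i + α j := hP2 i j hij
      have : (0 : ℝ) < ((⌊α i⌋ + ⌊α j⌋ : ℤ) : ℝ) := by
        push_cast
        have hi := hfloor i; have hj := hfloor j
        linarith
      have : (0 : ℤ) < ⌊α i⌋ + ⌊α j⌋ := by exact_mod_cast this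
      omega
    have hint := int_pair_sum_lemma 1 le_rfl I _ hg hI
    rw [mul_one] at hint
    have hintR : (I.card : ℝ) - 1 ≤ ((∑ i ∈ I, ⌊α i⌋ : ℤ) : ℝ) := by
      exact_mod_cast hint
    have hfposI : 0 < ∑ i ∈ I, Int.fract (α i) :=
      Finset.sum_pos (fun i _ => hfpos i) hne
    rw [hsplit]; linarith
  · -- case: sum of fractional parts > n
    have hg : ∀ i ∈ I, ∀ j ∈ I, i ≠ j → (0 : ℤ) ≤ ⌊α i⌋ + ⌊α j⌋ := by
      intro i _ j _ hij
      have h1 : 1 < α i + α j := hP2 i j hij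
      have : (-1 : ℝ) < ((⌊α i⌋ + ⌊α j⌋ : ℤ) : ℝ) := by
        push_cast
        have hi := hfloor i; have hj := hfloor j
        have := hflt i; have := hflt j
        linarith
      have : (-1 : ℤ) < ⌊α i⌋ + ⌊α j⌋ := by exact_mod_cast this
      omega
    have hint := int_pair_sum_lemma 0 (by norm_num) I _ hg hI
    rw [mul_zero] at hint
    have hintR : (0 : ℝ) ≤ ((∑ i ∈ I, ⌊α i⌋ : ℤ) : ℝ) := by exact_mod_cast hint
    -- ∑_{i ∈ I} fract > |I| - 1
    have h1 : ∑ i ∈ I, (1 - Int.fract (α i)) ≤ ∑ i, (1 - Int.fract (α i)) :=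
      Finset.sum_le_sum_of_subset_of_nonneg (Finset.subset_univ I)
        (fun i _ _ => by linarith [hflt i])
    have h2 : ∑ i, (1 - Int.fract (α i))
        = ((n : ℝ) + 1) - ∑ i, Int.fract (α i) := by
      rw [Finset.sum_sub_distrib]; simp
    have h3 : ∑ i ∈ I, (1 - Int.fract (α i))
        = (I.card : ℝ) - ∑ i ∈ I, Int.fract (α i) := by
      rw [Finset.sum_sub_distrib]; simp
    have hfsum : (I.card : ℝ) - 1 < ∑ i ∈ I, Int.fract (α i) := by
      rw [h3, h2] at h1; linarith
    rw [hsplit]; linarith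
end
end
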